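/- arXiv:1506.01685 — 2 statements merged into one kernel-verified Lean document; each statement's English description precedes it below -/
import Mathlib

section
/- For any DSE Φ of multiplicity n on a standard probability space and any ε > 0, there exists a piece θ : A → B (a partial isomorphism in [[E]] with graph(θ) contained in the support of M(Φ)) such that μ(A) > 1 − ε. -/
open MeasureTheory
open scoped ENNReal
set_option linter.unusedSectionVars false

/-- A measure-preserving partial isomorphism with domain `A`, given by the restriction of
`f` to `A`, whose graph is contained in the equivalence relation `E` (an element of `[[E]]`). -/
def IsPartialIso {X : Type*} [MeasurableSpace X] (μ : Measure X) (E : Set (X × X))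
    (A : Set X) (f : X → X) : Prop :=
  MeasurableSet A ∧ Measurable f ∧ Set.InjOn f A ∧ MeasurableSet (f '' A) ∧
    (∀ x ∈ A, (x, f x) ∈ E) ∧
    ∀ s ⊆ A, MeasurableSet s → μ (f '' s) = μ s

namespace DSE

open Set Function

variable {X : Type*} [MeasurableSpace X] [StandardBorelSpace X] [Nonempty X]
variable {μ : Measure X} {E : Set (X × X)} {m : ℕ} {Adom : Fin m → Set X} {f : Fin m → X → X}

/-- Lusin–Suslin wrapper. -/
lemma img_meas {g : X → X} {s : Set X} (hg : Measurable g) (hs : MeasurableSet s)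
    (hinj : Set.InjOn g s) : MeasurableSet (g '' s) :=
  hs.image_of_measurable_injOn hg hinj

lemma meas_ne {g h : X → X} (hg : Measurable g) (hh : Measurable h) :
    MeasurableSet {x | g x ≠ h x} := by
  obtain ⟨e, he⟩ := exists_measurableEmbedding_real X
  have : {x | g x ≠ h x} = {x | e (g x) = e (h x)}ᶜ := by
    ext x; simp [he.injective.eq_iff]
  rw [this]
  exact (measurableSet_eq_fun (he.measurable.comp hg) (he.measurable.comp hh)).compl

/-- `Function.invFunOn` of a measurable injective-on map is measurable. -/
lemma measurable_invFunOn {A : Set X} {θ : X → X} (hA : MeasurableSet A) (hθ : Measurable θ)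
    (hinj : Set.InjOn θ A) : Measurable (Function.invFunOn θ A) := by
  intro s hs
  classical
  have himA : MeasurableSet (θ '' A) := img_meas hθ hA hinj
  have h1 : MeasurableSet (θ '' (s ∩ A)) := img_meas hθ (hs.inter hA) (hinj.mono inter_subset_right)
  have heq : Function.invFunOn θ A ⁻¹' s =
      (θ '' (s ∩ A)) ∪ ((θ '' A)ᶜ ∩ (if Classical.choice ‹Nonempty X› ∈ s then univ else ∅)) := by
    ext y
    by_cases hy : y ∈ θ '' A
    · obtain ⟨a, ha, rfl⟩ := hy
      have hmem := Function.invFunOn_apply_mem (f := θ) ha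
      have heqa := Function.invFunOn_apply_eq (f := θ) ha
      have hval : Function.invFunOn θ A (θ a) = a := hinj hmem ha heqa
      simp only [mem_preimage, hval, mem_union, mem_inter_iff, mem_compl_iff]
      constructor
      · intro has; exact Or.inl ⟨a, ⟨has, ha⟩, rfl⟩
      · rintro (⟨b, ⟨hbs, hbA⟩, hba⟩ | ⟨hc, _⟩)
        · cases hinj hbA ha hba; exact hbs
        · exact absurd ⟨a, ha, rfl⟩ hc
    · have hno : ¬∃ a, a ∈ A ∧ θ a = y := by
        rintro ⟨a, ha, rfl⟩; exact hy ⟨a, ha, rfl⟩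
      have hval : Function.invFunOn θ A y = Classical.choice ‹Nonempty X› :=
        Function.invFunOn_neg hno
      simp only [mem_preimage, hval, mem_union, mem_inter_iff, mem_compl_iff]
      by_cases hc : Classical.choice ‹Nonempty X› ∈ s <;>
        simp only [hc, if_true, if_false, mem_univ, and_true, mem_empty_iff_false, and_false,
          or_false, iff_true, iff_false, mem_image, mem_inter_iff, true_iff, false_iff]
      · exact Or.inr hno
      · rintro ⟨a, ⟨_, haA⟩, rfl⟩; exact hy ⟨a, haA, rfl⟩
  rw [heq]
  exact h1.union (himA.compl.inter (by split <;> simp))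

/-- A *piece*: a partial isomorphism subordinate to the family `(Adom i, f i)`. -/
structure Pc (μ : Measure X) (E : Set (X × X)) (Adom : Fin m → Set X) (f : Fin m → X → X) where
  A : Set X
  θ : X → X
  iso : IsPartialIso μ E A θ
  sub : ∀ x ∈ A, ∃ i, x ∈ Adom i ∧ f i x = θ x

namespace Pc

variable (P : Pc μ E Adom f)

def B : Set X := P.θ '' P.A
def C : Set X := P.Aᶜ
def D : Set X := P.Bᶜ
noncomputable def g : X → X := Function.invFunOn P.θ P.A

lemma mA : MeasurableSet P.A := P.iso.1
lemma mθ : Measurable P.θ := P.iso.2.1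
lemma inj : Set.InjOn P.θ P.A := P.iso.2.2.1
lemma mB : MeasurableSet P.B := P.iso.2.2.2.1
lemma mC : MeasurableSet P.C := P.mA.compl
lemma mD : MeasurableSet P.D := P.mB.compl
lemma mp {s : Set X} (hs : s ⊆ P.A) (hms : MeasurableSet s) : μ (P.θ '' s) = μ s :=
  P.iso.2.2.2.2.2 s hs hms
lemma img_meas' {s : Set X} (hs : s ⊆ P.A) (hms : MeasurableSet s) :
    MeasurableSet (P.θ '' s) := img_meas P.mθ hms (P.inj.mono hs)
lemma measB : μ P.B = μ P.A := P.mp subset_rfl P.mA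
lemma measurable_g : Measurable P.g := measurable_invFunOn P.mA P.mθ P.inj
lemma g_mem {y : X} (hy : y ∈ P.B) : P.g y ∈ P.A := by
  obtain ⟨a, ha, rfl⟩ := hy; exact Function.invFunOn_apply_mem ha
lemma g_eq {y : X} (hy : y ∈ P.B) : P.θ (P.g y) = y := by
  obtain ⟨a, ha, rfl⟩ := hy; exact Function.invFunOn_apply_eq ha
lemma g_left {x : X} (hx : x ∈ P.A) : P.g (P.θ x) = x :=
  P.inj (P.g_mem ⟨x, hx, rfl⟩) hx (P.g_eq ⟨x, hx, rfl⟩)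
lemma g_img {t : Set X} (ht : t ⊆ P.B) (hmt : MeasurableSet t) :
    MeasurableSet (P.g '' t) ∧ μ (P.g '' t) = μ t ∧ P.g '' t ⊆ P.A ∧ P.θ '' (P.g '' t) = t := by
  have hsub : P.g '' t ⊆ P.A := by rintro _ ⟨y, hy, rfl⟩; exact P.g_mem (ht hy)
  have hinv : Set.InjOn P.g t := (Function.invFunOn_injOn_image P.θ P.A).mono ht
  have hm : MeasurableSet (P.g '' t) := img_meas P.measurable_g hmt hinv
  have himg : P.θ '' (P.g '' t) = t := by
    rw [← image_comp]
    exact (image_congr (fun y hy => P.g_eq (ht hy))).trans (image_id t)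
  refine ⟨hm, ?_, hsub, himg⟩
  calc μ (P.g '' t) = μ (P.θ '' (P.g '' t)) := (P.mp hsub hm).symm
    _ = μ t := by rw [himg]

end Pc

section Chain

variable (P : Pc μ E Adom f)

/-- Total measurable "alternating chain" map: follow `f i` then go back through `θ⁻¹`. -/
noncomputable def chain (w : List (Fin m)) (x : X) : X :=
  w.foldl (fun y i => P.g (f i y)) x

/-- Domain of validity of the chain map, starting anywhere. -/
def Dom : List (Fin m) → Set X
  | [] => univ
  | i :: w => Adom i ∩ f i ⁻¹' P.B ∩ (fun x => P.g (f i x)) ⁻¹' Dom w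

@[simp] lemma chain_nil (x : X) : chain P [] x = x := rfl

lemma chain_cons (i : Fin m) (w : List (Fin m)) (x : X) :
    chain P (i :: w) x = chain P w (P.g (f i x)) := rfl

lemma chain_append (u v : List (Fin m)) (x : X) :
    chain P (u ++ v) x = chain P v (chain P u x) := by
  simp [chain, List.foldl_append]

@[simp] lemma Dom_nil : Dom P [] = univ := rfl

lemma mem_Dom_cons {i : Fin m} {w : List (Fin m)} {x : X} :
    x ∈ Dom P (i :: w) ↔ x ∈ Adom i ∧ f i x ∈ P.B ∧ P.g (f i x) ∈ Dom P w := by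
  simp [Dom, and_assoc]

lemma Dom_append (u v : List (Fin m)) :
    Dom P (u ++ v) = Dom P u ∩ chain P u ⁻¹' Dom P v := by
  induction u with
  | nil => ext x; simp [chain]
  | cons i u ih =>
    ext x
    simp only [List.cons_append, mem_Dom_cons, ih, mem_inter_iff, mem_preimage, chain_cons]
    tauto

lemma Dom_prefix {u v : List (Fin m)} {x : X} (hx : x ∈ Dom P (u ++ v)) : x ∈ Dom P u := by
  rw [Dom_append] at hx; exact hx.1

variable (hiso : ∀ i, IsPartialIso μ E (Adom i) (f i))
include hiso

lemma measurable_chain (w : List (Fin m)) : Measurable (chain P w) := by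
  induction w with
  | nil => exact measurable_id
  | cons i w ih => exact ih.comp (P.measurable_g.comp (hiso i).2.1)

lemma meas_Dom (w : List (Fin m)) : MeasurableSet (Dom P w) := by
  induction w with
  | nil => exact MeasurableSet.univ
  | cons i w ih =>
    exact ((hiso i).1.inter ((hiso i).2.1 P.mB)).inter
      ((P.measurable_g.comp (hiso i).2.1) ih)

lemma chain_mem_A : ∀ {w : List (Fin m)}, w ≠ [] → ∀ {x : X}, x ∈ Dom P w → chain P w x ∈ P.A := by
  intro w
  induction w with
  | nil => intro h; exact absurd rfl h
  | cons i w ih =>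
    intro _ x hx
    rw [mem_Dom_cons] at hx
    rw [chain_cons]
    rcases eq_or_ne w [] with rfl | hw
    · exact P.g_mem hx.2.1
    · exact ih hw hx.2.2

lemma injOn_chain : ∀ w : List (Fin m), Set.InjOn (chain P w) (Dom P w) := by
  intro w
  induction w with
  | nil => exact fun x _ y _ h => h
  | cons i w ih =>
    intro x hx y hy hxy
    rw [mem_Dom_cons] at hx hy
    rw [chain_cons, chain_cons] at hxy
    have h1 : P.g (f i x) = P.g (f i y) := ih hx.2.2 hy.2.2 hxy
    have h2 : f i x = f i y := by
      rw [← P.g_eq hx.2.1, ← P.g_eq hy.2.1, h1]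
    exact (hiso i).2.2.1 hx.1 hy.1 h2

lemma chain_img : ∀ (w : List (Fin m)) {s : Set X}, s ⊆ Dom P w → MeasurableSet s →
    MeasurableSet (chain P w '' s) ∧ μ (chain P w '' s) = μ s := by
  intro w
  induction w with
  | nil =>
    intro s _ hms
    have h0 : chain P [] '' s = s := by ext y; simp [chain]
    rw [h0]; exact ⟨hms, rfl⟩
  | cons i w ih =>
    intro s hs hms
    have hsub : ∀ x ∈ s, x ∈ Adom i ∧ f i x ∈ P.B ∧ P.g (f i x) ∈ Dom P w :=
      fun x hx => (mem_Dom_cons P).mp (hs hx)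
    have hfs_meas : MeasurableSet (f i '' s) :=
      img_meas (hiso i).2.1 hms ((hiso i).2.2.1.mono (fun x hx => (hsub x hx).1))
    have hfs_mu : μ (f i '' s) = μ s :=
      (hiso i).2.2.2.2.2 s (fun x hx => (hsub x hx).1) hms
    have hfsB : f i '' s ⊆ P.B := by rintro _ ⟨x, hx, rfl⟩; exact (hsub x hx).2.1
    obtain ⟨hg_meas, hg_mu, hg_sub, -⟩ := P.g_img hfsB hfs_meas
    have hgDom : P.g '' (f i '' s) ⊆ Dom P w := by
      rintro _ ⟨_, ⟨x, hx, rfl⟩, rfl⟩; exact (hsub x hx).2.2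
    have himg : chain P (i :: w) '' s = chain P w '' (P.g '' (f i '' s)) := by
      rw [image_image, image_image]
      exact image_congr fun x _ => rfl
    obtain ⟨hm, hmu⟩ := ih hgDom hg_meas
    rw [himg]
    exact ⟨hm, by rw [hmu, hg_mu, hfs_mu]⟩

end Chain

section Sets

variable (P : Pc μ E Adom f)

/-- Successful augmenting-chain starting points for word `w` and final letter `i`. -/
def Succ (w : List (Fin m)) (i : Fin m) : Set X :=
  (P.C ∩ Dom P w) ∩ (chain P w) ⁻¹' (Adom i) ∩ (fun x => f i (chain P w x)) ⁻¹' P.D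

lemma mem_Succ {w : List (Fin m)} {i : Fin m} {x : X} :
    x ∈ Succ P w i ↔ x ∈ P.C ∧ x ∈ Dom P w ∧ chain P w x ∈ Adom i ∧ f i (chain P w x) ∈ P.D := by
  simp [Succ, and_assoc]

def pairsF (k : ℕ) : Finset (ℕ × ℕ) :=
  (Finset.range (k+1) ×ˢ Finset.range (k+1)).filter fun p => p.1 < p.2

lemma mem_pairsF {k : ℕ} {p : ℕ × ℕ} : p ∈ pairsF k ↔ p.1 < p.2 ∧ p.2 ≤ k := by
  simp only [pairsF, Finset.mem_filter, Finset.mem_product, Finset.mem_range]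
  omega

/-- Members of `Succ` whose chain never revisits a vertex. -/
def Free (w : List (Fin m)) (i : Fin m) : Set X :=
  Succ P w i ∩ ⋂ p ∈ pairsF w.length, {x | chain P (w.take p.1) x ≠ chain P (w.take p.2) x}

lemma mem_Free {w : List (Fin m)} {i : Fin m} {x : X} :
    x ∈ Free P w i ↔ x ∈ Succ P w i ∧
      ∀ a b, a < b → b ≤ w.length → chain P (w.take a) x ≠ chain P (w.take b) x := by
  simp only [Free, mem_inter_iff, mem_iInter, mem_setOf_eq]
  constructor
  · rintro ⟨h1, h2⟩
    exact ⟨h1, fun a b hab hb => h2 (a, b) (mem_pairsF.mpr ⟨hab, hb⟩)⟩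
  · rintro ⟨h1, h2⟩
    refine ⟨h1, fun p hp => ?_⟩
    obtain ⟨h3, h4⟩ := mem_pairsF.mp hp
    exact h2 p.1 p.2 h3 h4

def Words : ℕ → Finset (List (Fin m))
  | 0 => {[]}
  | j+1 => Words j ∪ (Finset.univ ×ˢ Words j).image fun p => p.1 :: p.2

lemma nil_mem_Words (j : ℕ) : ([] : List (Fin m)) ∈ Words j := by
  induction j with
  | zero => simp [Words]
  | succ j ih => simp only [Words, Finset.mem_union]; exact Or.inl ih

lemma mem_Words_of_length : ∀ (j : ℕ) (w : List (Fin m)), w.length ≤ j → w ∈ Words j := by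
  intro j
  induction j with
  | zero =>
    intro w hw
    rw [List.length_eq_zero_iff.mp (Nat.le_zero.mp hw)]
    exact nil_mem_Words 0
  | succ j ih =>
    intro w hw
    cases w with
    | nil => exact nil_mem_Words _
    | cons i w' =>
      simp only [Words, Finset.mem_union, Finset.mem_image]
      exact Or.inr ⟨(i, w'), by
        simp only [Finset.mem_product, Finset.mem_univ, true_and]
        exact ih w' (by simpa using Nat.succ_le_succ_iff.mp hw), rfl⟩

lemma length_le_of_mem_Words : ∀ (j : ℕ) (w : List (Fin m)), w ∈ Words j → w.length ≤ j := by
  intro j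
  induction j with
  | zero => intro w hw; simp only [Words, Finset.mem_singleton] at hw; simp [hw]
  | succ j ih =>
    intro w hw
    simp only [Words, Finset.mem_union, Finset.mem_image] at hw
    rcases hw with hw | ⟨p, hp, rfl⟩
    · exact (ih w hw).trans (Nat.le_succ j)
    · simp only [Finset.mem_product, Finset.mem_univ, true_and] at hp
      simpa using Nat.succ_le_succ (ih p.2 hp)

def U (j : ℕ) : Set X := ⋃ w ∈ Words (m := m) j, chain P w '' (P.C ∩ Dom P w)

def V (j : ℕ) : Set X := ⋃ i, f i '' (U P j ∩ Adom i)

lemma C_subset_U (j : ℕ) : P.C ⊆ U P j := by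
  intro x hx
  exact mem_biUnion (nil_mem_Words j) ⟨x, ⟨hx, mem_univ x⟩, rfl⟩

variable (hiso : ∀ i, IsPartialIso μ E (Adom i) (f i))
include hiso

lemma meas_Succ (w : List (Fin m)) (i : Fin m) : MeasurableSet (Succ P w i) :=
  (((P.mC.inter (meas_Dom P hiso w)).inter
    ((measurable_chain P hiso w) (hiso i).1)).inter
    (((hiso i).2.1.comp (measurable_chain P hiso w)) P.mD))

lemma meas_Free (w : List (Fin m)) (i : Fin m) : MeasurableSet (Free P w i) := by
  refine (meas_Succ P hiso w i).inter ?_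
  refine Set.Finite.measurableSet_biInter (pairsF w.length).finite_toSet fun p _ => ?_
  exact meas_ne (measurable_chain P hiso _) (measurable_chain P hiso _)

lemma meas_U (j : ℕ) : MeasurableSet (U P j) := by
  refine Set.Finite.measurableSet_biUnion (Words j).finite_toSet fun w _ => ?_
  exact (chain_img P hiso w inter_subset_right (P.mC.inter (meas_Dom P hiso w))).1

lemma meas_V (j : ℕ) : MeasurableSet (V P j) :=
  MeasurableSet.iUnion fun i =>
    img_meas (hiso i).2.1 ((meas_U P hiso j).inter (hiso i).1)
      ((hiso i).2.2.1.mono inter_subset_right)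

end Sets

section Counting

variable {n : ℕ} (P : Pc μ E Adom f)
variable (hiso : ∀ i, IsPartialIso μ E (Adom i) (f i))

lemma sum_inter_eq {S : Fin m → Set X} (hS : ∀ i, MeasurableSet (S i))
    (hsum : ∀ᵐ x ∂μ, ∑ i : Fin m, (S i).indicator (fun _ => (1 : ℝ≥0∞)) x = (n : ℝ≥0∞))
    {W : Set X} (hW : MeasurableSet W) : ∑ i : Fin m, μ (W ∩ S i) = n * μ W := by
  have h1 : ∀ i : Fin m, μ (W ∩ S i) =
      ∫⁻ x in W, (S i).indicator (fun _ => (1 : ℝ≥0∞)) x ∂μ := by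
    intro i
    rw [lintegral_indicator (hS i), setLIntegral_one, Measure.restrict_apply (hS i), inter_comm]
  calc ∑ i : Fin m, μ (W ∩ S i)
      = ∑ i : Fin m, ∫⁻ x in W, (S i).indicator (fun _ => (1 : ℝ≥0∞)) x ∂μ := by
        exact Finset.sum_congr rfl fun i _ => h1 i
    _ = ∫⁻ x in W, ∑ i : Fin m, (S i).indicator (fun _ => (1 : ℝ≥0∞)) x ∂μ := by
        rw [← lintegral_finset_sum]
        exact fun i _ => (measurable_one.indicator (hS i))
    _ = ∫⁻ _ in W, (n : ℝ≥0∞) ∂μ := lintegral_congr_ae (ae_restrict_of_ae hsum)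
    _ = n * μ W := by rw [setLIntegral_const]

include hiso in
lemma U_le_V (hn : n ≠ 0)
    (hrow : ∀ᵐ x ∂μ, ∑ i : Fin m, (Adom i).indicator (fun _ => (1 : ℝ≥0∞)) x = (n : ℝ≥0∞))
    (hcol : ∀ᵐ y ∂μ, ∑ i : Fin m,
      (f i '' Adom i).indicator (fun _ => (1 : ℝ≥0∞)) y = (n : ℝ≥0∞))
    (j : ℕ) : μ (U P j) ≤ μ (V P j) := by
  have hU := meas_U P hiso j
  have hV := meas_V P hiso j
  have hrow' := sum_inter_eq (n := n) (fun i => (hiso i).1) hrow hU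
  have hcol' := sum_inter_eq (n := n) (fun i => (hiso i).2.2.2.1) hcol hV
  have hmid : ∀ i : Fin m, μ (U P j ∩ Adom i) ≤ μ (V P j ∩ f i '' Adom i) := by
    intro i
    have h1 : μ (f i '' (U P j ∩ Adom i)) = μ (U P j ∩ Adom i) :=
      (hiso i).2.2.2.2.2 _ inter_subset_right (hU.inter (hiso i).1)
    rw [← h1]
    apply measure_mono
    exact subset_inter (subset_iUnion (fun i => f i '' (U P j ∩ Adom i)) i)
      (image_mono inter_subset_right)
  have h2 : (n : ℝ≥0∞) * μ (U P j) ≤ (n : ℝ≥0∞) * μ (V P j) := by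
    rw [← hrow', ← hcol']
    exact Finset.sum_le_sum fun i _ => hmid i
  have hn' : (n : ℝ≥0∞) ≠ 0 := Nat.cast_ne_zero.mpr hn
  exact (ENNReal.mul_le_mul_iff_right hn' (ENNReal.natCast_ne_top n)).mp h2

end Counting

section Fat

variable {n : ℕ} (P : Pc μ E Adom f)

lemma measAC [IsProbabilityMeasure μ] : μ P.A + μ P.C = 1 := by
  rw [← measure_univ (μ := μ)]
  exact measure_add_measure_compl P.mA

lemma fat [IsProbabilityMeasure μ] (hiso : ∀ i, IsPartialIso μ E (Adom i) (f i)) (hn : n ≠ 0)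
    (hrow : ∀ᵐ x ∂μ, ∑ i : Fin m, (Adom i).indicator (fun _ => (1 : ℝ≥0∞)) x = (n : ℝ≥0∞))
    (hcol : ∀ᵐ y ∂μ, ∑ i : Fin m,
      (f i '' Adom i).indicator (fun _ => (1 : ℝ≥0∞)) y = (n : ℝ≥0∞))
    (η : ℝ≥0∞) (hη : η ≤ μ P.C) (K N : ℕ)
    (hKη : 2 ≤ ((K : ℝ≥0∞) + 1) * η)
    (hNc : ((Words (m := m) K).card * m : ℕ) ≤ N) (τ : ℝ≥0∞)
    (hτ : (K : ℝ≥0∞) * ((N : ℝ≥0∞) * τ) < 1) :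
    ∃ w i, w.length ≤ K ∧ τ < μ (Succ P w i) := by
  by_contra hcon
  push_neg at hcon
  have count : ∀ j, μ (U P j) ≤ μ (V P j) := U_le_V P hiso hn hrow hcol
  have leak : ∀ j, j ≤ K → μ (V P j \ P.B) ≤ (N : ℝ≥0∞) * τ := by
    intro j hj
    have hsub : V P j \ P.B ⊆
        ⋃ i : Fin m, ⋃ w ∈ Words (m := m) j, f i '' (chain P w '' Succ P w i) := by
      rintro y ⟨hyV, hyB⟩
      simp only [V, mem_iUnion] at hyV
      obtain ⟨i, u, ⟨huU, huA⟩, rfl⟩ := hyV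
      simp only [U, mem_iUnion, exists_prop] at huU
      obtain ⟨w, hw, x0, ⟨hx0C, hx0D⟩, rfl⟩ := huU
      refine mem_iUnion.mpr ⟨i, mem_biUnion hw ⟨chain P w x0, ⟨x0, ?_, rfl⟩, rfl⟩⟩
      exact (mem_Succ P).mpr ⟨hx0C, hx0D, huA, hyB⟩
    have hcardN : ((m * (Words (m := m) j).card : ℕ) : ℝ≥0∞) ≤ (N : ℝ≥0∞) := by
      have hWsub : Words (m := m) j ⊆ Words (m := m) K := fun w hw =>
        mem_Words_of_length K w ((length_le_of_mem_Words j w hw).trans hj)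
      have : m * (Words (m := m) j).card ≤ N := by
        calc m * (Words (m := m) j).card = (Words (m := m) j).card * m := Nat.mul_comm _ _
          _ ≤ (Words (m := m) K).card * m :=
              Nat.mul_le_mul_right m (Finset.card_le_card hWsub)
          _ ≤ N := hNc
      exact_mod_cast this
    calc μ (V P j \ P.B)
        ≤ ∑ i : Fin m, μ (⋃ w ∈ Words (m := m) j, f i '' (chain P w '' Succ P w i)) :=
          (measure_mono hsub).trans (measure_iUnion_fintype_le _ _)
      _ ≤ ∑ _i : Fin m, ∑ _w ∈ Words (m := m) j, τ := by
          refine Finset.sum_le_sum fun i _ => le_trans (measure_biUnion_finset_le _ _) ?_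
          refine Finset.sum_le_sum fun w hw => ?_
          have hS := meas_Succ P hiso w i
          have hSsub : Succ P w i ⊆ Dom P w := fun x hx => ((mem_Succ P).mp hx).2.1
          obtain ⟨hcm, hcμ⟩ := chain_img P hiso w hSsub hS
          have hsubA : chain P w '' Succ P w i ⊆ Adom i := by
            rintro _ ⟨x, hx, rfl⟩; exact ((mem_Succ P).mp hx).2.2.1
          rw [(hiso i).2.2.2.2.2 _ hsubA hcm, hcμ]
          exact hcon w i ((length_le_of_mem_Words j w hw).trans hj)
      _ = ((m * (Words (m := m) j).card : ℕ) : ℝ≥0∞) * τ := by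
          simp [Finset.sum_const, mul_assoc]
      _ ≤ (N : ℝ≥0∞) * τ := mul_le_mul_left hcardN τ
  have step : ∀ j, j ≤ K → μ P.C + μ (U P j) ≤ μ (U P (j+1)) + (N : ℝ≥0∞) * τ := by
    intro j hj
    have himg : P.θ '' (P.A ∩ P.θ ⁻¹' V P j) = V P j ∩ P.B := by
      ext y; constructor
      · rintro ⟨x, ⟨hxA, hxV⟩, rfl⟩; exact ⟨hxV, ⟨x, hxA, rfl⟩⟩
      · rintro ⟨hyV, x, hxA, rfl⟩; exact ⟨x, ⟨hxA, hyV⟩, rfl⟩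
    have hmsub : MeasurableSet (P.A ∩ P.θ ⁻¹' V P j) := P.mA.inter (P.mθ (meas_V P hiso j))
    have hμ1 : μ (P.A ∩ P.θ ⁻¹' V P j) = μ (V P j ∩ P.B) := by
      rw [← P.mp inter_subset_left hmsub, himg]
    have hsubU : (P.A ∩ P.θ ⁻¹' V P j) ∪ P.C ⊆ U P (j+1) := by
      rintro x (⟨hxA, hxV⟩ | hxC)
      · simp only [mem_preimage, V, mem_iUnion] at hxV
        obtain ⟨i, u, ⟨huU, huA⟩, hfu⟩ := hxV
        simp only [U, mem_iUnion, exists_prop] at huU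
        obtain ⟨w, hw, x0, hx0, rfl⟩ := huU
        have hfB : f i (chain P w x0) ∈ P.B := by rw [hfu]; exact ⟨x, hxA, rfl⟩
        have hx0dom : x0 ∈ Dom P (w ++ [i]) := by
          rw [Dom_append]
          refine ⟨hx0.2, ?_⟩
          rw [mem_preimage]
          exact (mem_Dom_cons P).mpr ⟨huA, hfB, mem_univ _⟩
        have hchain : chain P (w ++ [i]) x0 = x := by
          rw [chain_append]
          show P.g (f i (chain P w x0)) = x
          rw [hfu, P.g_left hxA]
        have hwlen := length_le_of_mem_Words j w hw
        have hlen : (w ++ [i]).length ≤ j + 1 := by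
          simp only [List.length_append, List.length_cons, List.length_nil]
          omega
        exact mem_biUnion (mem_Words_of_length (j+1) _ hlen) ⟨x0, ⟨hx0.1, hx0dom⟩, hchain⟩
      · exact C_subset_U P (j+1) hxC
    have hdisj : Disjoint (P.A ∩ P.θ ⁻¹' V P j) P.C :=
      Set.disjoint_left.mpr fun x hx hxC => hxC hx.1
    calc μ P.C + μ (U P j)
        ≤ μ P.C + μ (V P j) := add_le_add_right (count j) _
      _ ≤ μ P.C + (μ (V P j ∩ P.B) + μ (V P j \ P.B)) :=
          add_le_add_right (measure_le_inter_add_diff μ _ _) _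
      _ ≤ μ P.C + (μ (V P j ∩ P.B) + (N : ℝ≥0∞) * τ) :=
          add_le_add_right (add_le_add_right (leak j hj) _) _
      _ = μ ((P.A ∩ P.θ ⁻¹' V P j) ∪ P.C) + (N : ℝ≥0∞) * τ := by
          rw [measure_union hdisj P.mC, hμ1]; ring
      _ ≤ μ (U P (j+1)) + (N : ℝ≥0∞) * τ :=
          add_le_add_left (measure_mono hsubU) _
  have main : ∀ j, j ≤ K →
      ((j : ℝ≥0∞) + 1) * μ P.C ≤ μ (U P j) + (j : ℝ≥0∞) * ((N : ℝ≥0∞) * τ) := by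
    intro j
    induction j with
    | zero => intro _; simpa using measure_mono (C_subset_U P 0)
    | succ j ih =>
      intro hj
      have h1 := ih (Nat.le_of_succ_le hj)
      have h2 := step j (Nat.le_of_succ_le hj)
      push_cast
      calc ((j : ℝ≥0∞) + 1 + 1) * μ P.C = μ P.C + ((j : ℝ≥0∞) + 1) * μ P.C := by ring
        _ ≤ μ P.C + (μ (U P j) + (j : ℝ≥0∞) * ((N : ℝ≥0∞) * τ)) := add_le_add_right h1 _
        _ = (μ P.C + μ (U P j)) + (j : ℝ≥0∞) * ((N : ℝ≥0∞) * τ) := by ring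
        _ ≤ (μ (U P (j+1)) + (N : ℝ≥0∞) * τ) + (j : ℝ≥0∞) * ((N : ℝ≥0∞) * τ) :=
            add_le_add_left h2 _
        _ = μ (U P (j+1)) + ((j : ℝ≥0∞) + 1) * ((N : ℝ≥0∞) * τ) := by ring
  have hUK : μ (U P K) ≤ 1 := (measure_mono (subset_univ _)).trans_eq measure_univ
  have h3 := main K le_rfl
  have h4 : (2 : ℝ≥0∞) ≤ 1 + (K : ℝ≥0∞) * ((N : ℝ≥0∞) * τ) := by
    calc (2 : ℝ≥0∞) ≤ ((K : ℝ≥0∞) + 1) * η := hKη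
      _ ≤ ((K : ℝ≥0∞) + 1) * μ P.C := mul_le_mul_right hη _
      _ ≤ μ (U P K) + (K : ℝ≥0∞) * ((N : ℝ≥0∞) * τ) := h3
      _ ≤ 1 + (K : ℝ≥0∞) * ((N : ℝ≥0∞) * τ) := add_le_add_left hUK _
  have h5 : 1 + (K : ℝ≥0∞) * ((N : ℝ≥0∞) * τ) < 2 := by
    have := ENNReal.add_lt_add_left (a := 1) ENNReal.one_ne_top hτ
    simpa [one_add_one_eq_two] using this
  exact absurd (h4.trans_lt h5) (lt_irrefl _)

end Fat

section Glue

open scoped Classical in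
/-- Replace `θ` by `f i` on `G`. -/
noncomputable def glueFun (P : Pc μ E Adom f) (i : Fin m) (G : Set X) : X → X :=
  fun x => if x ∈ G then f i x else P.θ x

lemma glueFun_of_mem (P : Pc μ E Adom f) (i : Fin m) {G : Set X} {x : X} (hx : x ∈ G) :
    glueFun P i G x = f i x := by classical simp [glueFun, hx]

lemma glueFun_of_not_mem (P : Pc μ E Adom f) (i : Fin m) {G : Set X} {x : X} (hx : x ∉ G) :
    glueFun P i G x = P.θ x := by classical simp [glueFun, hx]

lemma glueFun_img (P : Pc μ E Adom f) (i : Fin m) (G s : Set X) :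
    glueFun P i G '' s = f i '' (s ∩ G) ∪ P.θ '' (s \ G) := by
  ext y
  constructor
  · rintro ⟨x, hx, rfl⟩
    by_cases hxG : x ∈ G
    · exact Or.inl ⟨x, ⟨hx, hxG⟩, (glueFun_of_mem P i hxG).symm⟩
    · exact Or.inr ⟨x, ⟨hx, hxG⟩, (glueFun_of_not_mem P i hxG).symm⟩
  · rintro (⟨x, ⟨hx, hxG⟩, rfl⟩ | ⟨x, ⟨hx, hxG⟩, rfl⟩)
    · exact ⟨x, hx, glueFun_of_mem P i hxG⟩
    · exact ⟨x, hx, glueFun_of_not_mem P i hxG⟩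

lemma glue (P : Pc μ E Adom f) (hiso : ∀ i, IsPartialIso μ E (Adom i) (f i)) (i : Fin m)
    {G : Set X} (hGm : MeasurableSet G) (hGA : G ⊆ Adom i)
    (hdisj : Disjoint (f i '' G) (P.θ '' (P.A \ G))) :
    ∃ P' : Pc μ E Adom f, P'.A = P.A ∪ G ∧ P'.θ = glueFun P i G := by
  classical
  have hmeasθ' : Measurable (glueFun P i G) := Measurable.ite hGm (hiso i).2.1 P.mθ
  have hsubA : ∀ s : Set X, s ⊆ P.A ∪ G → s \ G ⊆ P.A := by
    intro s hs x hx
    rcases hs hx.1 with h | h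
    · exact h
    · exact absurd h hx.2
  have hinj : Set.InjOn (glueFun P i G) (P.A ∪ G) := by
    intro x hx y hy hxy
    by_cases hxG : x ∈ G <;> by_cases hyG : y ∈ G
    · rw [glueFun_of_mem P i hxG, glueFun_of_mem P i hyG] at hxy
      exact (hiso i).2.2.1 (hGA hxG) (hGA hyG) hxy
    · rw [glueFun_of_mem P i hxG, glueFun_of_not_mem P i hyG] at hxy
      have hyA : y ∈ P.A := by rcases hy with h | h; exact h; exact absurd h hyG
      exact absurd ⟨y, ⟨hyA, hyG⟩, rfl⟩ (Set.disjoint_left.mp hdisj (hxy ▸ ⟨x, hxG, rfl⟩))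
    · rw [glueFun_of_not_mem P i hxG, glueFun_of_mem P i hyG] at hxy
      have hxA : x ∈ P.A := by rcases hx with h | h; exact h; exact absurd h hxG
      exact absurd ⟨x, ⟨hxA, hxG⟩, rfl⟩ (Set.disjoint_left.mp hdisj (hxy ▸ ⟨y, hyG, rfl⟩))
    · rw [glueFun_of_not_mem P i hxG, glueFun_of_not_mem P i hyG] at hxy
      have hxA : x ∈ P.A := by rcases hx with h | h; exact h; exact absurd h hxG
      have hyA : y ∈ P.A := by rcases hy with h | h; exact h; exact absurd h hyG
      exact P.inj hxA hyA hxy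
  have hmimg : MeasurableSet (glueFun P i G '' (P.A ∪ G)) := by
    rw [glueFun_img]
    refine MeasurableSet.union ?_ ?_
    · refine img_meas (hiso i).2.1 ((P.mA.union hGm).inter hGm)
        ((hiso i).2.2.1.mono ((inter_subset_right).trans hGA))
    · exact P.img_meas' (hsubA _ subset_rfl) ((P.mA.union hGm).diff hGm)
  have hgraph : ∀ x ∈ P.A ∪ G, (x, glueFun P i G x) ∈ E := by
    intro x hx
    by_cases hxG : x ∈ G
    · rw [glueFun_of_mem P i hxG]; exact (hiso i).2.2.2.2.1 x (hGA hxG)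
    · rw [glueFun_of_not_mem P i hxG]
      have hxA : x ∈ P.A := by rcases hx with h | h; exact h; exact absurd h hxG
      exact P.iso.2.2.2.2.1 x hxA
  have hmp : ∀ s ⊆ P.A ∪ G, MeasurableSet s → μ (glueFun P i G '' s) = μ s := by
    intro s hs hms
    rw [glueFun_img]
    have h1 : μ (f i '' (s ∩ G)) = μ (s ∩ G) :=
      (hiso i).2.2.2.2.2 _ ((inter_subset_right).trans hGA) (hms.inter hGm)
    have h2 : μ (P.θ '' (s \ G)) = μ (s \ G) := P.mp (hsubA s hs) (hms.diff hGm)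
    have hd : Disjoint (f i '' (s ∩ G)) (P.θ '' (s \ G)) :=
      hdisj.mono (image_mono inter_subset_right)
        (image_mono (fun x (hx : x ∈ s \ G) => show x ∈ P.A \ G from ⟨hsubA s hs hx, hx.2⟩))
    rw [measure_union hd (P.img_meas' (hsubA s hs) (hms.diff hGm)), h1, h2,
      measure_inter_add_diff s hGm]
  have hsub : ∀ x ∈ P.A ∪ G, ∃ i', x ∈ Adom i' ∧ f i' x = glueFun P i G x := by
    intro x hx
    by_cases hxG : x ∈ G
    · exact ⟨i, hGA hxG, (glueFun_of_mem P i hxG).symm⟩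
    · have hxA : x ∈ P.A := by rcases hx with h | h; exact h; exact absurd h hxG
      obtain ⟨i', h1, h2⟩ := P.sub x hxA
      exact ⟨i', h1, by rw [glueFun_of_not_mem P i hxG]; exact h2⟩
  exact ⟨⟨P.A ∪ G, glueFun P i G,
    ⟨P.mA.union hGm, hmeasθ', hinj, hmimg, hgraph, hmp⟩, hsub⟩, rfl, rfl⟩

end Glue

section Improve

variable (hiso : ∀ i, IsPartialIso μ E (Adom i) (f i))
include hiso

lemma improve : ∀ (w : List (Fin m)) (P : Pc μ E Adom f) (i : Fin m) (T : Set X),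
    MeasurableSet T → T ⊆ P.C → T ⊆ Dom P w →
    (∀ x ∈ T, chain P w x ∈ Adom i ∧ f i (chain P w x) ∈ P.D) →
    (∀ a b, a < b → b ≤ w.length →
      Disjoint (chain P (w.take a) '' T) (chain P (w.take b) '' T)) →
    ∃ P' : Pc μ E Adom f, μ P.A + μ T ≤ μ P'.A := by
  intro w
  induction w using List.reverseRecOn with
  | nil =>
    intro P i T hTm hTC _ hsucc _
    have hTA : T ⊆ Adom i := fun x hx => (hsucc x hx).1
    have hTD : f i '' T ⊆ P.D := by rintro _ ⟨x, hx, rfl⟩; exact (hsucc x hx).2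
    have hdisj : Disjoint (f i '' T) (P.θ '' (P.A \ T)) := by
      refine Set.disjoint_left.mpr fun y hy1 hy2 => ?_
      exact hTD hy1 (image_mono diff_subset hy2)
    obtain ⟨P', hA', _⟩ := glue P hiso i hTm hTA hdisj
    refine ⟨P', ?_⟩
    rw [hA', measure_union (Set.disjoint_right.mpr fun x hx => hTC hx) hTm]
  | append_singleton w j ih =>
    intro P i T hTm hTC hTdom hsucc hind
    have hlen1 : (w ++ [j]).length = w.length + 1 := by simp
    have hTdom' : T ⊆ Dom P w := fun x hx => Dom_prefix P (hTdom hx)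
    have hGA : chain P (w ++ [j]) '' T ⊆ P.A := by
      rintro _ ⟨x, hx, rfl⟩; exact chain_mem_A P hiso (by simp) (hTdom hx)
    set G := chain P (w ++ [j]) '' T with hGdef
    have hGAdom : G ⊆ Adom i := by rintro _ ⟨x, hx, rfl⟩; exact (hsucc x hx).1
    have hGm : MeasurableSet G := (chain_img P hiso _ hTdom hTm).1
    have hfiD : f i '' G ⊆ P.D := by
      rintro _ ⟨_, ⟨x, hx, rfl⟩, rfl⟩; exact (hsucc x hx).2
    have hdisj : Disjoint (f i '' G) (P.θ '' (P.A \ G)) := by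
      refine Set.disjoint_left.mpr fun y hy1 hy2 => ?_
      exact hfiD hy1 (image_mono diff_subset hy2)
    obtain ⟨P1, hA1, hθ1⟩ := glue P hiso i hGm hGAdom hdisj
    have hA1' : P1.A = P.A := by rw [hA1, union_eq_self_of_subset_right hGA]
    have hθ1G : ∀ x ∈ G, P1.θ x = f i x := fun x hx => by
      rw [hθ1]; exact glueFun_of_mem P i hx
    have hθ1nG : ∀ x ∉ G, P1.θ x = P.θ x := fun x hx => by
      rw [hθ1]; exact glueFun_of_not_mem P i hx
    have key : ∀ k, k ≤ w.length → ∀ x ∈ T,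
        chain P1 (w.take k) x = chain P (w.take k) x ∧ x ∈ Dom P1 (w.take k) := by
      intro k
      induction k with
      | zero =>
        intro _ x _
        constructor
        · rw [List.take_zero]; rfl
        · rw [List.take_zero]; exact mem_univ x
      | succ k ihk =>
        intro hk x hx
        obtain ⟨hceq, hdom1⟩ := ihk (Nat.le_of_succ_le hk) x hx
        have hklt : k < w.length := hk
        have htake : w.take (k+1) = w.take k ++ [w[k]] := (List.take_concat_get' w k hklt).symm
        have hxk1 : x ∈ Dom P (w.take (k+1)) := by
          have h0 : x ∈ Dom P (w.take (k+1) ++ w.drop (k+1)) := by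
            rw [List.take_append_drop]; exact hTdom' hx
          exact Dom_prefix P h0
        have h2 : chain P (w.take k) x ∈ Adom (w[k]) ∧
            f (w[k]) (chain P (w.take k) x) ∈ P.B := by
          rw [htake, Dom_append] at hxk1
          have h3 := (mem_Dom_cons P).mp (mem_preimage.mp hxk1.2)
          exact ⟨h3.1, h3.2.1⟩
        have huval : chain P (w.take (k+1)) x = P.g (f (w[k]) (chain P (w.take k) x)) := by
          rw [htake, chain_append]; rfl
        have hne : w.take (k+1) ≠ [] := by
          intro h0
          have := congrArg List.length h0
          simp only [List.length_take, List.length_nil] at this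
          omega
        have huA : chain P (w.take (k+1)) x ∈ P.A := chain_mem_A P hiso hne hxk1
        have hfav : f (w[k]) (chain P (w.take k) x) = P.θ (chain P (w.take (k+1)) x) := by
          rw [huval]; exact (P.g_eq h2.2).symm
        have huG : chain P (w.take (k+1)) x ∉ G := by
          intro hmem
          have hd := hind (k+1) (w.length+1) (by omega) (by rw [hlen1])
          rw [List.take_append_of_le_length (by omega),
            List.take_of_length_le (le_of_eq hlen1)] at hd
          exact Set.disjoint_left.mp hd ⟨x, hx, rfl⟩ hmem
        have huA1 : chain P (w.take (k+1)) x ∈ P1.A := by rw [hA1']; exact huA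
        have hθ1u : P1.θ (chain P (w.take (k+1)) x) = P.θ (chain P (w.take (k+1)) x) :=
          hθ1nG _ huG
        have hfB1 : f (w[k]) (chain P (w.take k) x) ∈ P1.B :=
          ⟨_, huA1, by rw [hθ1u, ← hfav]⟩
        have hg1 : P1.g (f (w[k]) (chain P (w.take k) x)) = chain P (w.take (k+1)) x := by
          rw [hfav, ← hθ1u]; exact P1.g_left huA1
        constructor
        · rw [htake, chain_append P1, chain_append P]
          show P1.g (f (w[k]) (chain P1 (w.take k) x)) = P.g (f (w[k]) (chain P (w.take k) x))
          rw [hceq, hg1, huval]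
        · rw [htake, Dom_append]
          refine ⟨hdom1, ?_⟩
          rw [mem_preimage, hceq]
          exact (mem_Dom_cons P1).mpr ⟨h2.1, hfB1, mem_univ _⟩
    have hTdom1 : T ⊆ Dom P1 w := fun x hx => by
      have h0 := (key w.length le_rfl x hx).2; rwa [List.take_length] at h0
    have hchain1 : ∀ x ∈ T, chain P1 w x = chain P w x := fun x hx => by
      have h0 := (key w.length le_rfl x hx).1; rwa [List.take_length] at h0
    have hTC1 : T ⊆ P1.C := by
      intro x hx
      show x ∈ P1.Aᶜ
      rw [hA1']
      exact hTC hx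
    have hsucc1 : ∀ x ∈ T, chain P1 w x ∈ Adom j ∧ f j (chain P1 w x) ∈ P1.D := by
      intro x hx
      rw [hchain1 x hx]
      have hxd := hTdom hx
      rw [Dom_append] at hxd
      have h3 := (mem_Dom_cons P).mp (mem_preimage.mp hxd.2)
      refine ⟨h3.1, ?_⟩
      have hzG : chain P (w ++ [j]) x ∈ G := ⟨x, hx, rfl⟩
      have hz : chain P (w ++ [j]) x = P.g (f j (chain P w x)) := by
        rw [chain_append]; rfl
      have hfθz : f j (chain P w x) = P.θ (chain P (w ++ [j]) x) := by
        rw [hz]; exact (P.g_eq h3.2.1).symm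
      show f j (chain P w x) ∈ P1.Bᶜ
      intro hB1
      obtain ⟨u', hu'A, hu'eq⟩ := hB1
      have hu'A' : u' ∈ P.A := by rwa [hA1'] at hu'A
      by_cases hu'G : u' ∈ G
      · rw [hθ1G u' hu'G] at hu'eq
        have h5 : f i u' ∈ P.D := hfiD ⟨u', hu'G, rfl⟩
        rw [hu'eq, hfθz] at h5
        exact h5 ⟨_, hGA hzG, rfl⟩
      · rw [hθ1nG u' hu'G, hfθz] at hu'eq
        have h6 := P.inj hu'A' (hGA hzG) hu'eq
        exact hu'G (h6 ▸ hzG)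
    have hind1 : ∀ a b, a < b → b ≤ w.length →
        Disjoint (chain P1 (w.take a) '' T) (chain P1 (w.take b) '' T) := by
      intro a b hab hb
      have e1 : chain P1 (w.take a) '' T = chain P (w.take a) '' T :=
        image_congr fun x hx => (key a (le_of_lt (lt_of_lt_of_le hab hb)) x hx).1
      have e2 : chain P1 (w.take b) '' T = chain P (w.take b) '' T :=
        image_congr fun x hx => (key b hb x hx).1
      rw [e1, e2]
      have hd := hind a b hab (by rw [hlen1]; omega)
      rwa [List.take_append_of_le_length (le_trans (Nat.le_of_lt hab) hb),
        List.take_append_of_le_length hb] at hd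
    obtain ⟨P', hP'⟩ := ih P1 j T hTm hTC1 hTdom1 hsucc1 hind1
    refine ⟨P', ?_⟩
    calc μ P.A + μ T = μ P1.A + μ T := by rw [hA1']
      _ ≤ μ P'.A := hP'

end Improve

section SelfInt

variable (P : Pc μ E Adom f)

lemma Free_subset (w : List (Fin m)) (i : Fin m) : Free P w i ⊆ Succ P w i :=
  inter_subset_left

lemma Succ_subset_Dom (w : List (Fin m)) (i : Fin m) : Succ P w i ⊆ Dom P w :=
  fun x hx => ((mem_Succ P).mp hx).2.1

lemma shortcut {w : List (Fin m)} {i : Fin m} {a b : ℕ} (hab : a < b) (hb : b ≤ w.length) :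
    Succ P w i ∩ {x | chain P (w.take a) x = chain P (w.take b) x} ⊆
      Succ P (w.take a ++ w.drop b) i := by
  rintro x ⟨hx, heq⟩
  obtain ⟨hC, hdom, hAdom, hD⟩ := (mem_Succ P).mp hx
  have h1 : x ∈ Dom P (w.take b) ∧ chain P (w.take b) x ∈ Dom P (w.drop b) := by
    have h0 := hdom
    rw [← List.take_append_drop b w, Dom_append] at h0
    exact ⟨h0.1, mem_preimage.mp h0.2⟩
  have h2 : x ∈ Dom P (w.take a) := by
    have h0 : x ∈ Dom P ((w.take b).take a) := by
      have h3 : x ∈ Dom P ((w.take b).take a ++ (w.take b).drop a) := by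
        rw [List.take_append_drop]; exact h1.1
      exact Dom_prefix P h3
    rwa [List.take_take, min_eq_left (Nat.le_of_lt hab)] at h0
  have h3 : x ∈ Dom P (w.take a ++ w.drop b) := by
    rw [Dom_append]
    refine ⟨h2, ?_⟩
    rw [mem_preimage, heq]
    exact h1.2
  have h4 : chain P (w.take a ++ w.drop b) x = chain P w x := by
    rw [chain_append, heq, ← chain_append, List.take_append_drop]
  exact (mem_Succ P).mpr ⟨hC, h3, by rw [h4]; exact hAdom, by rw [h4]; exact hD⟩

lemma exists_avg {α : Type*} {s : Finset α} {g : α → ℝ≥0∞} {t : ℝ≥0∞} (ht0 : t ≠ 0)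
    (h : t ≤ ∑ p ∈ s, g p) : ∃ p ∈ s, t * (s.card : ℝ≥0∞)⁻¹ ≤ g p := by
  by_contra hno
  push_neg at hno
  have hne : s.Nonempty := by
    rcases Finset.eq_empty_or_nonempty s with rfl | hne
    · simp only [Finset.sum_empty, le_zero_iff] at h; exact absurd h ht0
    · exact hne
  have hcard0 : (s.card : ℝ≥0∞) ≠ 0 := by
    simp [Finset.card_ne_zero_of_mem hne.choose_spec]
  have hlt : ∑ p ∈ s, g p < ∑ _p ∈ s, t * (s.card : ℝ≥0∞)⁻¹ :=
    ENNReal.sum_lt_sum_of_nonempty hne fun p hp => hno p hp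
  rw [Finset.sum_const, nsmul_eq_mul, ← mul_assoc, mul_comm (s.card : ℝ≥0∞) t,
    mul_assoc, ENNReal.mul_inv_cancel hcard0 (ENNReal.natCast_ne_top _), mul_one] at hlt
  exact absurd (h.trans_lt hlt) (lt_irrefl t)

lemma card_pairsF (L : ℕ) : (pairsF L).card ≤ (L+1) * (L+1) := by
  calc (pairsF L).card ≤ ((Finset.range (L+1)) ×ˢ (Finset.range (L+1))).card :=
        Finset.card_filter_le _ _
    _ = (L+1) * (L+1) := by simp

lemma selfint (hiso : ∀ i, IsPartialIso μ E (Adom i) (f i)) (K : ℕ) :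
    ∀ k, k ≤ K → ∀ (w : List (Fin m)) (i : Fin m) (β : ℝ≥0∞), β ≠ ∞ → w.length ≤ k →
    β ≤ μ (Succ P w i) →
    ∃ (w' : List (Fin m)) (i' : Fin m), w'.length ≤ K ∧
      β * (((2 * (K+1)^2 : ℕ) : ℝ≥0∞))⁻¹ ^ (k+1) ≤ μ (Free P w' i') := by
  have hc1 : (((2 * (K+1)^2 : ℕ) : ℝ≥0∞))⁻¹ ≤ 1 := by
    rw [ENNReal.inv_le_one]
    exact_mod_cast Nat.one_le_iff_ne_zero.mpr (by positivity)
  have hc2 : (((2 * (K+1)^2 : ℕ) : ℝ≥0∞))⁻¹ ≤ 2⁻¹ := by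
    apply ENNReal.inv_le_inv.mpr
    exact_mod_cast Nat.le_mul_of_pos_right 2 (by positivity)
  set c : ℝ≥0∞ := (((2 * (K+1)^2 : ℕ) : ℝ≥0∞))⁻¹ with hcdef
  intro k
  induction k with
  | zero =>
    intro _ w i β hβtop hwlen hβ
    have hw : w = [] := List.eq_nil_of_length_eq_zero (Nat.le_zero.mp hwlen)
    subst hw
    have hsub : Succ P [] i ⊆ Free P [] i := fun x hx =>
      (mem_Free P).mpr ⟨hx, fun a b hab hb => by omega⟩
    refine ⟨[], i, by simp, ?_⟩
    calc β * c ^ 1 ≤ β * 1 := mul_le_mul_right (by rw [pow_one]; exact hc1) β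
      _ = β := mul_one β
      _ ≤ μ (Free P [] i) := hβ.trans (measure_mono hsub)
  | succ k ihk =>
    intro hkK w i β hβtop hwlen hβ
    by_cases hcase : β * c ^ (k+2) ≤ μ (Free P w i)
    · exact ⟨w, i, hwlen.trans hkK, hcase⟩
    · have hβ0 : β ≠ 0 := by
        intro h0
        exact hcase (by simp [h0])
      have hfree_lt : μ (Free P w i) < β * c ^ (k+2) := lt_of_not_ge hcase
      have hck2 : c ^ (k+2) ≤ 2⁻¹ := by
        calc c ^ (k+2) = c * c ^ (k+1) := by ring
          _ ≤ c * 1 := mul_le_mul_right (pow_le_one' hc1 (k+1)) c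
          _ = c := mul_one c
          _ ≤ 2⁻¹ := hc2
      have hdiff : β / 2 ≤ μ (Succ P w i \ Free P w i) := by
        have h0 : β ≤ μ (Free P w i) + μ (Succ P w i \ Free P w i) := by
          calc β ≤ μ (Succ P w i) := hβ
            _ ≤ μ (Succ P w i ∩ Free P w i) + μ (Succ P w i \ Free P w i) :=
              measure_le_inter_add_diff μ _ _
            _ = μ (Free P w i) + μ (Succ P w i \ Free P w i) := by
              rw [inter_eq_self_of_subset_right (Free_subset P w i)]
        have h1 : β ≤ β / 2 + μ (Succ P w i \ Free P w i) := by
          refine h0.trans (add_le_add_left ?_ _)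
          calc μ (Free P w i) ≤ β * c ^ (k+2) := le_of_lt hfree_lt
            _ ≤ β * 2⁻¹ := mul_le_mul_right hck2 β
            _ = β / 2 := by rw [ENNReal.div_eq_inv_mul, mul_comm]
        have h2 : β - β / 2 ≤ μ (Succ P w i \ Free P w i) := tsub_le_iff_left.mpr h1
        rwa [ENNReal.sub_half hβtop] at h2
      have hcover : Succ P w i \ Free P w i ⊆
          ⋃ p ∈ pairsF w.length,
            (Succ P w i ∩ {x | chain P (w.take p.1) x = chain P (w.take p.2) x}) := by
        intro x hx
        have hxS := hx.1
        have hxnF := hx.2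
        have h0 : ¬ (∀ a b, a < b → b ≤ w.length →
            chain P (w.take a) x ≠ chain P (w.take b) x) := fun h =>
          hxnF ((mem_Free P).mpr ⟨hxS, h⟩)
        push_neg at h0
        obtain ⟨a, b, hab, hb, heq⟩ := h0
        exact mem_biUnion (show (a, b) ∈ pairsF w.length from mem_pairsF.mpr ⟨hab, hb⟩)
          (show x ∈ Succ P w i ∩ {x | chain P (w.take (a, b).1) x = chain P (w.take (a, b).2) x}
            from ⟨hxS, heq⟩)
      have hsum : β / 2 ≤ ∑ p ∈ pairsF w.length,
          μ (Succ P w i ∩ {x | chain P (w.take p.1) x = chain P (w.take p.2) x}) :=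
        hdiff.trans ((measure_mono hcover).trans (measure_biUnion_finset_le _ _))
      have hhalf0 : β / 2 ≠ 0 := by
        simp only [ne_eq, ENNReal.div_eq_zero_iff]
        push_neg
        exact ⟨hβ0, by norm_num⟩
      obtain ⟨p, hp, hμp⟩ := exists_avg hhalf0 hsum
      obtain ⟨hab, hbL⟩ := mem_pairsF.mp hp
      -- the shortened word
      set w2 := w.take p.1 ++ w.drop p.2 with hw2
      have hlen2 : w2.length ≤ k := by
        simp only [hw2, List.length_append, List.length_take, List.length_drop]
        omega
      have hβ2 : β * c ≤ μ (Succ P w2 i) := by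
        have hcardle : ((pairsF w.length).card : ℝ≥0∞)⁻¹ ≥
            (((K+1) * (K+1) : ℕ) : ℝ≥0∞)⁻¹ := by
          apply ENNReal.inv_le_inv.mpr
          have := card_pairsF w.length
          have h5 : (w.length + 1) * (w.length + 1) ≤ (K+1)*(K+1) := by
            have : w.length + 1 ≤ K + 1 := by omega
            exact Nat.mul_le_mul this this
          exact_mod_cast this.trans h5
        have havg : β * c ≤ β / 2 * ((pairsF w.length).card : ℝ≥0∞)⁻¹ := by
          have h6 : β * c = β / 2 * (((K+1) * (K+1) : ℕ) : ℝ≥0∞)⁻¹ := by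
            rw [ENNReal.div_eq_inv_mul, hcdef]
            rw [show ((2 * (K+1)^2 : ℕ) : ℝ≥0∞) = 2 * (((K+1) * (K+1) : ℕ) : ℝ≥0∞) by
              push_cast; ring]
            rw [ENNReal.mul_inv (Or.inl (by norm_num)) (Or.inl (by norm_num))]
            ring
          rw [h6]
          exact mul_le_mul_right hcardle _
        refine (havg.trans hμp).trans (measure_mono ?_)
        exact shortcut P hab hbL
      obtain ⟨w', i', hlen', hfinal⟩ := ihk (Nat.le_of_succ_le hkK) w2 i (β * c)
        (ENNReal.mul_ne_top hβtop (by simp [hcdef])) hlen2 hβ2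
      refine ⟨w', i', hlen', ?_⟩
      calc β * c ^ (k+2) = (β * c) * c ^ (k+1) := by ring
        _ ≤ μ (Free P w' i') := hfinal

end SelfInt

section Indep

variable (P : Pc μ E Adom f)

def opairs (L : ℕ) : Finset (ℕ × ℕ) :=
  (Finset.range (L+1) ×ˢ Finset.range (L+1)).filter fun p => p.1 ≠ p.2

lemma mem_opairs {L : ℕ} {p : ℕ × ℕ} : p ∈ opairs L ↔ p.1 ≠ p.2 ∧ p.1 ≤ L ∧ p.2 ≤ L := by
  simp only [opairs, Finset.mem_filter, Finset.mem_product, Finset.mem_range]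
  omega

lemma card_opairs (L : ℕ) : (opairs L).card ≤ (L+1) * (L+1) := by
  calc (opairs L).card ≤ ((Finset.range (L+1)) ×ˢ (Finset.range (L+1))).card :=
        Finset.card_filter_le _ _
    _ = (L+1) * (L+1) := by simp

/-- The collision partner map. -/
noncomputable def psi (w : List (Fin m)) (i : Fin m) (p : ℕ × ℕ) : X → X :=
  fun x => Function.invFunOn (chain P (w.take p.2)) (Free P w i) (chain P (w.take p.1) x)

/-- The set where a genuine collision partner exists. -/
def Wgate (w : List (Fin m)) (i : Fin m) (p : ℕ × ℕ) : Set X :=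
  Free P w i ∩ (chain P (w.take p.1)) ⁻¹' (chain P (w.take p.2) '' Free P w i)

/-- Collision-freeness of a set of chain starting points. -/
def Pred (w : List (Fin m)) (T : Set X) : Prop :=
  ∀ x ∈ T, ∀ y ∈ T, ∀ a b : ℕ, a ≠ b → a ≤ w.length → b ≤ w.length →
    chain P (w.take a) x ≠ chain P (w.take b) y

/-- Collision neighbours. -/
def Nb (w : List (Fin m)) (i : Fin m) (T : Set X) : Set X :=
  ⋃ p ∈ opairs w.length, psi P w i p '' (T ∩ Wgate P w i p)

lemma Free_subset_Dom_take (w : List (Fin m)) (i : Fin m) (b : ℕ) :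
    Free P w i ⊆ Dom P (w.take b) := by
  intro x hx
  have h := Succ_subset_Dom P w i (Free_subset P w i hx)
  have h2 : x ∈ Dom P (w.take b ++ w.drop b) := by rw [List.take_append_drop]; exact h
  exact Dom_prefix P h2

lemma rat_interval (r : ℝ) (F : Finset ℝ) (hF : r ∉ F) :
    ∃ q1 q2 : ℚ, r ∈ Set.Ioo (q1 : ℝ) (q2 : ℝ) ∧
      ∀ z ∈ F, z ∉ Set.Ioo (q1 : ℝ) (q2 : ℝ) := by
  rcases Finset.eq_empty_or_nonempty F with rfl | hne
  · obtain ⟨q1, _, hq1'⟩ := exists_rat_btwn (sub_one_lt r)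
    obtain ⟨q2, hq2, _⟩ := exists_rat_btwn (lt_add_one r)
    exact ⟨q1, q2, ⟨hq1', hq2⟩, by simp⟩
  · set δ := F.inf' hne fun z => |z - r| with hδdef
    have hδ : 0 < δ := by
      rw [hδdef, Finset.lt_inf'_iff]
      intro z hz
      exact abs_pos.mpr (sub_ne_zero.mpr fun h => hF (h ▸ hz))
    obtain ⟨q1, hq1, hq1'⟩ := exists_rat_btwn (sub_lt_self r hδ)
    obtain ⟨q2, hq2, hq2'⟩ := exists_rat_btwn (lt_add_of_pos_right r hδ)
    refine ⟨q1, q2, ⟨hq1', hq2⟩, fun z hz hzI => ?_⟩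
    have h1 : |z - r| < δ := by
      rw [abs_sub_lt_iff]
      constructor
      · linarith [hzI.2]
      · linarith [hzI.1]
    exact absurd h1 (not_lt.mpr (Finset.inf'_le _ hz))


variable (hiso : ∀ i, IsPartialIso μ E (Adom i) (f i))
include hiso

lemma injOn_take (w : List (Fin m)) (i : Fin m) (b : ℕ) :
    Set.InjOn (chain P (w.take b)) (Free P w i) :=
  (injOn_chain P hiso _).mono (Free_subset_Dom_take P w i b)

lemma psi_eq {w : List (Fin m)} {i : Fin m} {p : ℕ × ℕ} {x y : X} (hx : x ∈ Free P w i)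
    (hy : y ∈ Free P w i) (heq : chain P (w.take p.1) x = chain P (w.take p.2) y) :
    x ∈ Wgate P w i p ∧ psi P w i p x = y := by
  have hgate : x ∈ Wgate P w i p := ⟨hx, by rw [mem_preimage, heq]; exact ⟨y, hy, rfl⟩⟩
  refine ⟨hgate, ?_⟩
  have hex : ∃ z, z ∈ Free P w i ∧ chain P (w.take p.2) z = chain P (w.take p.1) x :=
    ⟨y, hy, heq.symm⟩
  have hmem := Function.invFunOn_mem hex
  have heq2 := Function.invFunOn_eq hex
  exact injOn_take P hiso w i p.2 hmem hy (heq2.trans heq)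

lemma meas_chain_img_Free (w : List (Fin m)) (i : Fin m) (b : ℕ) {s : Set X}
    (hs : s ⊆ Free P w i) (hms : MeasurableSet s) :
    MeasurableSet (chain P (w.take b) '' s) ∧ μ (chain P (w.take b) '' s) = μ s :=
  chain_img P hiso _ (hs.trans (Free_subset_Dom_take P w i b)) hms

lemma measurable_psi (w : List (Fin m)) (i : Fin m) (p : ℕ × ℕ) :
    Measurable (psi P w i p) :=
  (measurable_invFunOn (meas_Free P hiso w i) (measurable_chain P hiso _)
    (injOn_take P hiso w i p.2)).comp (measurable_chain P hiso _)

lemma meas_Wgate (w : List (Fin m)) (i : Fin m) (p : ℕ × ℕ) :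
    MeasurableSet (Wgate P w i p) :=
  (meas_Free P hiso w i).inter ((measurable_chain P hiso _)
    (meas_chain_img_Free P hiso w i p.2 subset_rfl (meas_Free P hiso w i)).1)

lemma psi_img (w : List (Fin m)) (i : Fin m) (p : ℕ × ℕ) {T : Set X}
    (hT : T ⊆ Free P w i) (hTm : MeasurableSet T) :
    MeasurableSet (psi P w i p '' (T ∩ Wgate P w i p)) ∧
      μ (psi P w i p '' (T ∩ Wgate P w i p)) ≤ μ T := by
  set S := Free P w i
  set cb := chain P (w.take p.2)
  set ca := chain P (w.take p.1)
  have hs0m : MeasurableSet (T ∩ Wgate P w i p) := hTm.inter (meas_Wgate P hiso w i p)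
  have hs0S : T ∩ Wgate P w i p ⊆ S := (inter_subset_left).trans hT
  have himg : psi P w i p '' (T ∩ Wgate P w i p) =
      Function.invFunOn cb S '' (ca '' (T ∩ Wgate P w i p)) := by
    rw [image_image]
    rfl
  obtain ⟨hcam, hcaμ⟩ := meas_chain_img_Free P hiso w i p.1 hs0S hs0m
  have hca_sub : ca '' (T ∩ Wgate P w i p) ⊆ cb '' S := by
    rintro _ ⟨x, hx, rfl⟩
    exact mem_preimage.mp hx.2.2
  -- inverse image facts
  have hinv_inj : Set.InjOn (Function.invFunOn cb S) (cb '' S) :=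
    Function.invFunOn_injOn_image cb S
  have hinv_meas : Measurable (Function.invFunOn cb S) :=
    measurable_invFunOn (meas_Free P hiso w i) (measurable_chain P hiso _)
      (injOn_take P hiso w i p.2)
  have hrm : MeasurableSet (Function.invFunOn cb S '' (ca '' (T ∩ Wgate P w i p))) :=
    img_meas hinv_meas hcam (hinv_inj.mono hca_sub)
  have hrsub : Function.invFunOn cb S '' (ca '' (T ∩ Wgate P w i p)) ⊆ S := by
    rintro _ ⟨y, hy, rfl⟩
    obtain ⟨z, hz, hez⟩ := hca_sub hy
    exact Function.invFunOn_mem ⟨z, hz, hez⟩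
  have hcb_inv : cb '' (Function.invFunOn cb S '' (ca '' (T ∩ Wgate P w i p))) =
      ca '' (T ∩ Wgate P w i p) := by
    rw [image_image]
    refine (image_congr fun y hy => ?_).trans (image_id _)
    obtain ⟨z, hz, hez⟩ := hca_sub hy
    exact Function.invFunOn_eq ⟨z, hz, hez⟩
  have hrμ : μ (Function.invFunOn cb S '' (ca '' (T ∩ Wgate P w i p))) =
      μ (ca '' (T ∩ Wgate P w i p)) := by
    have h2 := (meas_chain_img_Free P hiso w i p.2 hrsub hrm).2
    calc μ (Function.invFunOn cb S '' (ca '' (T ∩ Wgate P w i p)))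
        = μ (cb '' (Function.invFunOn cb S '' (ca '' (T ∩ Wgate P w i p)))) := h2.symm
      _ = μ (ca '' (T ∩ Wgate P w i p)) := by rw [hcb_inv]
  rw [himg]
  refine ⟨hrm, ?_⟩
  rw [hrμ, hcaμ]
  exact measure_mono inter_subset_left

lemma qual (w : List (Fin m)) (i : Fin m) {R : Set X} (hRm : MeasurableSet R)
    (hRS : R ⊆ Free P w i) (hR : 0 < μ R) :
    ∃ T', MeasurableSet T' ∧ T' ⊆ R ∧ Pred P w T' ∧ 0 < μ T' := by
  classical
  obtain ⟨e, he⟩ := exists_measurableEmbedding_real X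
  set L := w.length with hL
  set TT : ℚ × ℚ → Set X := fun q =>
    (R ∩ e ⁻¹' (Set.Ioo (q.1 : ℝ) (q.2 : ℝ))) ∩
      ⋂ p ∈ opairs L, (Wgate P w i p ∩
        (fun x => e (psi P w i p x)) ⁻¹' (Set.Ioo (q.1 : ℝ) (q.2 : ℝ)))ᶜ with hTTdef
  have hTTm : ∀ q, MeasurableSet (TT q) := by
    intro q
    refine ((hRm.inter (he.measurable measurableSet_Ioo)).inter ?_)
    refine Set.Finite.measurableSet_biInter (opairs L).finite_toSet fun p _ => ?_
    exact ((meas_Wgate P hiso w i p).inter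
      ((he.measurable.comp (measurable_psi P hiso w i p)) measurableSet_Ioo)).compl
  have hcover : R ⊆ ⋃ q : ℚ × ℚ, TT q := by
    intro x hx
    have hxF : x ∈ Free P w i := hRS hx
    set F : Finset ℝ :=
      ((opairs L).filter fun p => x ∈ Wgate P w i p).image fun p => e (psi P w i p x) with hFdef
    have hexF : e x ∉ F := by
      rw [hFdef]
      simp only [Finset.mem_image, Finset.mem_filter]
      rintro ⟨p, ⟨hp, hpW⟩, hpe⟩
      have hpsix : psi P w i p x = x := he.injective hpe
      obtain ⟨hab, ha, hb⟩ := mem_opairs.mp hp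
      -- genuine partner z with chain_{p.2} z = chain_{p.1} x; z = psi p x = x
      obtain ⟨z, hz, hez⟩ := mem_preimage.mp hpW.2
      have hexz : ∃ z', z' ∈ Free P w i ∧
          chain P (w.take p.2) z' = chain P (w.take p.1) x := ⟨z, hz, hez⟩
      have heq2 := Function.invFunOn_eq hexz
      have heq2' : chain P (w.take p.2) x = chain P (w.take p.1) x := by
        calc chain P (w.take p.2) x = chain P (w.take p.2) (psi P w i p x) := by rw [hpsix]
          _ = chain P (w.take p.1) x := heq2
      have hfree := (mem_Free P).mp hxF
      rcases Nat.lt_or_ge p.1 p.2 with hlt | hge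
      · exact hfree.2 p.1 p.2 hlt hb heq2'.symm
      · have hlt2 : p.2 < p.1 := lt_of_le_of_ne hge (Ne.symm hab)
        exact hfree.2 p.2 p.1 hlt2 ha heq2'
    obtain ⟨q1, q2, hq, hqF⟩ := rat_interval (e x) F hexF
    refine mem_iUnion.mpr ⟨(q1, q2), ⟨⟨hx, hq⟩, ?_⟩⟩
    refine mem_iInter₂.mpr fun p hp => ?_
    intro hmem
    refine hqF (e (psi P w i p x)) ?_ hmem.2
    rw [hFdef]
    exact Finset.mem_image.mpr ⟨p, Finset.mem_filter.mpr ⟨hp, hmem.1⟩, rfl⟩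
  have hex : ∃ q : ℚ × ℚ, 0 < μ (TT q) := by
    by_contra hno
    push_neg at hno
    have h0 : μ (⋃ q : ℚ × ℚ, TT q) = 0 :=
      measure_iUnion_null fun q => le_antisymm (hno q) zero_le
    exact absurd ((measure_mono hcover).trans_eq h0) (by simpa using hR.ne')
  obtain ⟨q, hq⟩ := hex
  refine ⟨TT q, hTTm q, (inter_subset_left).trans inter_subset_left, ?_, hq⟩
  intro x hx y hy a b hab ha hb heq
  have hxF : x ∈ Free P w i := hRS hx.1.1
  have hyF : y ∈ Free P w i := hRS hy.1.1
  obtain ⟨hgate, hpsieq⟩ := psi_eq P hiso (p := (a, b)) hxF hyF heq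
  have hpop : (a, b) ∈ opairs L := mem_opairs.mpr ⟨hab, ha, hb⟩
  have hx3 := mem_iInter₂.mp hx.2 (a, b) hpop
  apply hx3
  refine ⟨hgate, ?_⟩
  show e (psi P w i (a, b) x) ∈ Set.Ioo (q.1 : ℝ) (q.2 : ℝ)
  rw [hpsieq]
  exact hy.1.2

end Indep

section Exhaust

variable (P : Pc μ E Adom f)
variable (hiso : ∀ i, IsPartialIso μ E (Adom i) (f i))
include hiso

lemma pred_union {w : List (Fin m)} {i : Fin m} {T T' : Set X} (hT : T ⊆ Free P w i)
    (hT' : T' ⊆ Free P w i) (hPT : Pred P w T) (hPT' : Pred P w T')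
    (hdisj : Disjoint T' (Nb P w i T)) : Pred P w (T ∪ T') := by
  intro x hx y hy a b hab ha hb heq
  rcases hx with hx | hx <;> rcases hy with hy | hy
  · exact hPT x hx y hy a b hab ha hb heq
  · obtain ⟨hgate, hpsieq⟩ := psi_eq P hiso (p := (a, b)) (hT hx) (hT' hy) heq
    have h2 : y ∈ Nb P w i T :=
      mem_biUnion (mem_opairs.mpr ⟨hab, ha, hb⟩) ⟨x, ⟨hx, hgate⟩, hpsieq⟩
    exact Set.disjoint_left.mp hdisj hy h2
  · obtain ⟨hgate, hpsieq⟩ := psi_eq P hiso (p := (b, a)) (hT hy) (hT' hx) heq.symm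
    have h2 : x ∈ Nb P w i T :=
      mem_biUnion (mem_opairs.mpr ⟨Ne.symm hab, hb, ha⟩) ⟨y, ⟨hy, hgate⟩, hpsieq⟩
    exact Set.disjoint_left.mp hdisj hx h2
  · exact hPT' x hx y hy a b hab ha hb heq

lemma indep [IsProbabilityMeasure μ] (w : List (Fin m)) (i : Fin m) :
    ∃ T, MeasurableSet T ∧ T ⊆ Free P w i ∧ Pred P w T ∧
      μ (Free P w i) ≤ (((w.length + 1) * (w.length + 1) + 1 : ℕ) : ℝ≥0∞) * μ T := by
  classical
  set S := Free P w i with hSdef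
  set L := w.length with hLdef
  set Cd : Set X → Set (Set X) := fun T =>
    {T' | MeasurableSet T' ∧ T' ⊆ S ∧ Disjoint T' (T ∪ Nb P w i T) ∧ Pred P w (T ∪ T')}
    with hCddef
  have hstep : ∀ T : Set X, MeasurableSet T → T ⊆ S → Pred P w T →
      ∃ T', T' ∈ Cd T ∧ sSup ((μ ·) '' Cd T) ≤ 2 * μ T' := by
    intro T hTm hTS hTP
    have hempty : (∅ : Set X) ∈ Cd T := by
      refine ⟨MeasurableSet.empty, empty_subset _, ?_, by rwa [union_empty]⟩
      exact Set.disjoint_left.mpr fun x hx => absurd hx (notMem_empty x)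
    rcases eq_or_ne (sSup ((μ ·) '' Cd T)) 0 with hs | hs
    · exact ⟨∅, hempty, by rw [hs]; exact zero_le⟩
    · have hstop : sSup ((μ ·) '' Cd T) ≠ ∞ := by
        have h1 : sSup ((μ ·) '' Cd T) ≤ 1 := by
          refine sSup_le ?_
          rintro _ ⟨T', _, rfl⟩
          exact prob_le_one
        exact (h1.trans_lt (by norm_num)).ne
      have hhalf : sSup ((μ ·) '' Cd T) / 2 < sSup ((μ ·) '' Cd T) :=
        ENNReal.half_lt_self hs hstop
      obtain ⟨b, ⟨T', hT', rfl⟩, hb⟩ := lt_sSup_iff.mp hhalf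
      refine ⟨T', hT', ?_⟩
      calc sSup ((μ ·) '' Cd T) = 2 * (sSup ((μ ·) '' Cd T) / 2) := by
            rw [ENNReal.mul_div_cancel two_ne_zero (by norm_num)]
        _ ≤ 2 * μ T' := mul_le_mul_right hb.le _
  have hpred_empty : Pred P w (∅ : Set X) := fun x hx => absurd hx (notMem_empty x)
  let Sub := {T : Set X // MeasurableSet T ∧ T ⊆ S ∧ Pred P w T}
  let pick : Sub → Set X := fun z => (hstep z.1 z.2.1 z.2.2.1 z.2.2.2).choose
  have hpick : ∀ z : Sub, pick z ∈ Cd z.1 ∧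
      sSup ((μ ·) '' Cd z.1) ≤ 2 * μ (pick z) :=
    fun z => (hstep z.1 z.2.1 z.2.2.1 z.2.2.2).choose_spec
  let next : Sub → Sub := fun z =>
    ⟨z.1 ∪ pick z, by
      obtain ⟨⟨h1, h2, _, h4⟩, _⟩ := hpick z
      exact ⟨z.2.1.union h1, union_subset z.2.2.1 h2, h4⟩⟩
  let z0 : Sub := ⟨∅, MeasurableSet.empty, empty_subset _, hpred_empty⟩
  let sq : ℕ → Sub := fun n => next^[n] z0
  have hsq : ∀ n, sq (n+1) = next (sq n) := fun n => Function.iterate_succ_apply' next n z0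
  have hsqval : ∀ n, (sq (n+1)).1 = (sq n).1 ∪ pick (sq n) := fun n => by
    rw [hsq n]
  have hmono : Monotone fun n => (sq n).1 :=
    monotone_nat_of_le_succ fun n => by rw [hsqval n]; exact subset_union_left
  set TT : Set X := ⋃ n, (sq n).1 with hTTdef
  have hTTm : MeasurableSet TT := MeasurableSet.iUnion fun n => (sq n).2.1
  have hTTS : TT ⊆ S := iUnion_subset fun n => (sq n).2.2.1
  have hTTP : Pred P w TT := by
    intro x hx y hy a b hab ha hb
    obtain ⟨n1, hn1⟩ := mem_iUnion.mp hx
    obtain ⟨n2, hn2⟩ := mem_iUnion.mp hy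
    exact (sq (max n1 n2)).2.2.2 x (hmono (le_max_left n1 n2) hn1)
      y (hmono (le_max_right n1 n2) hn2) a b hab ha hb
  have hNbmono : ∀ T T' : Set X, T ⊆ T' → Nb P w i T ⊆ Nb P w i T' := by
    intro T T' h
    exact iUnion₂_mono fun p _ => image_mono (inter_subset_inter_left _ h)
  have hNbm : MeasurableSet (Nb P w i TT) :=
    Set.Finite.measurableSet_biUnion (opairs L).finite_toSet fun p _ =>
      (psi_img P hiso w i p hTTS hTTm).1
  have hRnull : μ (S \ (TT ∪ Nb P w i TT)) = 0 := by
    by_contra hR0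
    have hRpos : 0 < μ (S \ (TT ∪ Nb P w i TT)) := pos_iff_ne_zero.mpr hR0
    have hRm : MeasurableSet (S \ (TT ∪ Nb P w i TT)) :=
      (meas_Free P hiso w i).diff (hTTm.union hNbm)
    obtain ⟨T'', hT''m, hT''sub, hT''P, hT''pos⟩ :=
      qual P hiso w i hRm diff_subset hRpos
    have hT''S : T'' ⊆ S := hT''sub.trans diff_subset
    have hT''disj : Disjoint T'' (TT ∪ Nb P w i TT) :=
      Set.disjoint_left.mpr fun x hx hx2 => (hT''sub hx).2 hx2
    have hcand : ∀ n, T'' ∈ Cd (sq n).1 := by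
      intro n
      refine ⟨hT''m, hT''S, ?_, ?_⟩
      · refine Set.disjoint_left.mpr fun x hx hx2 => ?_
        refine Set.disjoint_left.mp hT''disj hx ?_
        rcases hx2 with h | h
        · exact Or.inl (mem_iUnion.mpr ⟨n, h⟩)
        · exact Or.inr (hNbmono _ _ (subset_iUnion (fun k => (sq k).1) n) h)
      · refine pred_union P hiso (sq n).2.2.1 hT''S (sq n).2.2.2 hT''P ?_
        refine Set.disjoint_left.mpr fun x hx hx2 => ?_
        refine Set.disjoint_left.mp hT''disj hx ?_
        exact Or.inr (hNbmono _ _ (subset_iUnion (fun k => (sq k).1) n) hx2)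
    have hgrow : ∀ n, μ (sq n).1 + μ T'' / 2 ≤ μ (sq (n+1)).1 := by
      intro n
      obtain ⟨hmem, hsup⟩ := hpick (sq n)
      have h1 : μ T'' ≤ 2 * μ (pick (sq n)) :=
        le_trans (le_sSup (mem_image_of_mem (μ ·) (hcand n))) hsup
      have h2 : μ T'' / 2 ≤ μ (pick (sq n)) := by
        rw [ENNReal.div_le_iff_le_mul (Or.inl two_ne_zero) (Or.inl (by norm_num))]
        rwa [mul_comm] at h1
      have hdisjn : Disjoint (sq n).1 (pick (sq n)) :=
        (hmem.2.2.1.mono_right subset_union_left).symm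
      rw [hsqval n, measure_union hdisjn hmem.1]
      exact add_le_add_right h2 _
    have hlin : ∀ n : ℕ, (n : ℝ≥0∞) * (μ T'' / 2) ≤ μ (sq n).1 := by
      intro n
      induction n with
      | zero => simp
      | succ n ih =>
        push_cast
        calc ((n : ℝ≥0∞) + 1) * (μ T'' / 2) = (n : ℝ≥0∞) * (μ T'' / 2) + μ T'' / 2 := by ring
          _ ≤ μ (sq n).1 + μ T'' / 2 := add_le_add_left ih _
          _ ≤ μ (sq (n+1)).1 := hgrow n
    have hc0 : μ T'' / 2 ≠ 0 := by
      simp only [ne_eq, ENNReal.div_eq_zero_iff]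
      push_neg
      exact ⟨hT''pos.ne', by norm_num⟩
    have hctop : μ T'' / 2 ≠ ∞ := by
      refine (lt_of_le_of_lt ?_ (lt_top_iff_ne_top.mpr ENNReal.one_ne_top)).ne
      calc μ T'' / 2 ≤ μ T'' := ENNReal.half_le_self
        _ ≤ 1 := prob_le_one
    obtain ⟨n, hn⟩ := ENNReal.exists_nat_gt
      (show 1 / (μ T'' / 2) ≠ ∞ from (ENNReal.div_lt_top ENNReal.one_ne_top hc0).ne)
    have hgt : 1 < (n : ℝ≥0∞) * (μ T'' / 2) := by
      rw [← ENNReal.div_lt_iff (Or.inl hc0) (Or.inl hctop)]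
      exact hn
    have := (hgt.trans_le (hlin n)).trans_le (prob_le_one (μ := μ))
    exact absurd this (lt_irrefl 1)
  have hNb_le : μ (Nb P w i TT) ≤ (((L+1) * (L+1) : ℕ) : ℝ≥0∞) * μ TT := by
    calc μ (Nb P w i TT) ≤ ∑ p ∈ opairs L, μ (psi P w i p '' (TT ∩ Wgate P w i p)) :=
          measure_biUnion_finset_le _ _
      _ ≤ ∑ _p ∈ opairs L, μ TT :=
          Finset.sum_le_sum fun p _ => (psi_img P hiso w i p hTTS hTTm).2
      _ = ((opairs L).card : ℝ≥0∞) * μ TT := by rw [Finset.sum_const, nsmul_eq_mul]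
      _ ≤ (((L+1) * (L+1) : ℕ) : ℝ≥0∞) * μ TT := by
          refine mul_le_mul_left ?_ _
          exact_mod_cast card_opairs L
  refine ⟨TT, hTTm, hTTS, hTTP, ?_⟩
  calc μ S ≤ μ (S ∩ (TT ∪ Nb P w i TT)) + μ (S \ (TT ∪ Nb P w i TT)) :=
        measure_le_inter_add_diff μ _ _
    _ = μ (S ∩ (TT ∪ Nb P w i TT)) := by rw [hRnull, add_zero]
    _ ≤ μ (TT ∪ Nb P w i TT) := measure_mono inter_subset_right
    _ ≤ μ TT + μ (Nb P w i TT) := measure_union_le _ _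
    _ ≤ μ TT + (((L+1) * (L+1) : ℕ) : ℝ≥0∞) * μ TT := add_le_add_right hNb_le _
    _ = (((L + 1) * (L + 1) + 1 : ℕ) : ℝ≥0∞) * μ TT := by push_cast; ring

end Exhaust

section Final

variable {n : ℕ}

lemma gain [IsProbabilityMeasure μ] (hiso : ∀ i, IsPartialIso μ E (Adom i) (f i))
    (hn : n ≠ 0)
    (hrow : ∀ᵐ x ∂μ, ∑ i : Fin m, (Adom i).indicator (fun _ => (1 : ℝ≥0∞)) x = (n : ℝ≥0∞))
    (hcol : ∀ᵐ y ∂μ, ∑ i : Fin m,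
      (f i '' Adom i).indicator (fun _ => (1 : ℝ≥0∞)) y = (n : ℝ≥0∞))
    (η : ℝ≥0∞) (hη0 : η ≠ 0) (hη1 : η ≤ 1) :
    ∃ c0 : ℝ≥0∞, c0 ≠ 0 ∧ c0 ≠ ∞ ∧ ∀ P : Pc μ E Adom f, η ≤ μ P.C →
      ∃ P' : Pc μ E Adom f, μ P.A + c0 ≤ μ P'.A := by
  have hηtop : η ≠ ∞ := (hη1.trans_lt (by norm_num)).ne
  obtain ⟨K, hK⟩ := ENNReal.exists_nat_gt
    (show (2 : ℝ≥0∞) / η ≠ ∞ from (ENNReal.div_lt_top (by norm_num) hη0).ne)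
  have hKη : 2 ≤ ((K : ℝ≥0∞) + 1) * η := by
    have h2 : (2 : ℝ≥0∞) < (K : ℝ≥0∞) * η := by
      rw [← ENNReal.div_lt_iff (Or.inl hη0) (Or.inl hηtop)]
      exact hK
    exact h2.le.trans (mul_le_mul_left le_self_add η)
  set N : ℕ := (Words (m := m) K).card * m with hNdef
  set τ : ℝ≥0∞ := ((2*K*N+1 : ℕ) : ℝ≥0∞)⁻¹ with hτdef
  have hτne : τ ≠ 0 := ENNReal.inv_ne_zero.mpr (ENNReal.natCast_ne_top _)
  have hτtop : τ ≠ ∞ := ENNReal.inv_ne_top.mpr (Nat.cast_ne_zero.mpr (by omega))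
  have hτlt : (K : ℝ≥0∞) * ((N : ℝ≥0∞) * τ) < 1 := by
    have he1 : (K : ℝ≥0∞) * ((N : ℝ≥0∞) * τ) = ((K*N : ℕ) : ℝ≥0∞) * τ := by
      push_cast; ring
    rw [he1, hτdef, ← div_eq_mul_inv,
      ENNReal.div_lt_iff (Or.inl (Nat.cast_ne_zero.mpr (by omega)))
        (Or.inl (ENNReal.natCast_ne_top _)), one_mul]
    refine Nat.cast_lt.mpr ?_
    have h : K * N ≤ 2 * K * N := by
      rw [mul_assoc]
      exact Nat.le_mul_of_pos_left _ (by norm_num)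
    omega
  set c1 : ℝ≥0∞ := (((2 * (K+1)^2 : ℕ) : ℝ≥0∞))⁻¹ with hc1def
  have hc1ne : c1 ≠ 0 := ENNReal.inv_ne_zero.mpr (ENNReal.natCast_ne_top _)
  have hc1top : c1 ≠ ∞ := ENNReal.inv_ne_top.mpr (Nat.cast_ne_zero.mpr (by positivity))
  set M : ℝ≥0∞ := (((K+1)*(K+1)+1 : ℕ) : ℝ≥0∞) with hMdef
  have hM0 : M ≠ 0 := Nat.cast_ne_zero.mpr (by omega)
  have hMtop : M ≠ ∞ := ENNReal.natCast_ne_top _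
  refine ⟨τ * c1 ^ (K+1) * M⁻¹, ?_, ?_, ?_⟩
  · exact mul_ne_zero (mul_ne_zero hτne (pow_ne_zero _ hc1ne)) (ENNReal.inv_ne_zero.mpr hMtop)
  · exact ENNReal.mul_ne_top (ENNReal.mul_ne_top hτtop (ENNReal.pow_ne_top hc1top))
      (ENNReal.inv_ne_top.mpr hM0)
  intro P hPC
  obtain ⟨w, i, hwlen, hfat⟩ := fat P hiso hn hrow hcol η hPC K N hKη le_rfl τ hτlt
  obtain ⟨w', i', hwlen', hfree⟩ := selfint P hiso K K le_rfl w i τ hτtop hwlen hfat.le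
  obtain ⟨T, hTm, hTsub, hTpred, hTμ⟩ := indep P hiso w' i'
  have hσT : τ * c1 ^ (K+1) ≤ M * μ T := by
    refine (hfree.trans (hTμ.trans ?_))
    refine mul_le_mul_left ?_ _
    rw [hMdef]
    exact_mod_cast Nat.add_le_add_right
      (Nat.mul_le_mul (by omega) (by omega)) 1
  have hT_lb : τ * c1 ^ (K+1) * M⁻¹ ≤ μ T := by
    have h5 := mul_le_mul_left hσT M⁻¹
    have h6 : (M * μ T) * M⁻¹ = μ T := by
      rw [mul_comm M (μ T), mul_assoc, ENNReal.mul_inv_cancel hM0 hMtop, mul_one]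
    exact h5.trans_eq h6
  have hTC : T ⊆ P.C := fun x hx =>
    ((mem_Succ P).mp (Free_subset P w' i' (hTsub hx))).1
  have hTdom : T ⊆ Dom P w' := fun x hx =>
    ((mem_Succ P).mp (Free_subset P w' i' (hTsub hx))).2.1
  have hsucc : ∀ x ∈ T, chain P w' x ∈ Adom i' ∧ f i' (chain P w' x) ∈ P.D := fun x hx =>
    ⟨((mem_Succ P).mp (Free_subset P w' i' (hTsub hx))).2.2.1,
     ((mem_Succ P).mp (Free_subset P w' i' (hTsub hx))).2.2.2⟩
  have hind : ∀ a b, a < b → b ≤ w'.length →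
      Disjoint (chain P (w'.take a) '' T) (chain P (w'.take b) '' T) := by
    intro a b hab hb
    refine Set.disjoint_left.mpr ?_
    rintro _ ⟨x, hx, rfl⟩ ⟨y, hy, heq⟩
    exact hTpred x hx y hy a b (Nat.ne_of_lt hab) (hab.le.trans hb) hb heq.symm
  obtain ⟨P', hP'⟩ := improve hiso w' P i' T hTm hTC hTdom hsucc hind
  exact ⟨P', le_trans (add_le_add_right hT_lb _) hP'⟩

end Final

end DSE

/-- for any DSE `Φ` of multiplicity `n` on a standard probability space and
any `ε > 0`, there exists a piece `θ : A → B` (a partial isomorphism with graph contained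
in the support `H = ⋃_i graph φ_i` of `M(Φ)`) such that `μ(A) > 1 − ε`. -/
theorem exists_large_piece
    {X : Type*} [MeasurableSpace X] [StandardBorelSpace X]
    (μ : Measure X) [IsProbabilityMeasure μ]
    (E : Set (X × X)) (hE : Equivalence fun x y => (x, y) ∈ E)
    (hcnt : ∀ x, {y | (x, y) ∈ E}.Countable)
    (m n : ℕ) (hn : 1 ≤ n) (Adom : Fin m → Set X) (f : Fin m → X → X)
    (hiso : ∀ i, IsPartialIso μ E (Adom i) (f i))
    (hrow : ∀ᵐ x ∂μ, ∑ i : Fin m, (Adom i).indicator (fun _ => (1 : ℝ≥0∞)) x = (n : ℝ≥0∞))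
    (hcol : ∀ᵐ y ∂μ, ∑ i : Fin m,
      (f i '' Adom i).indicator (fun _ => (1 : ℝ≥0∞)) y = (n : ℝ≥0∞))
    (ε : ℝ≥0∞) (hε : 0 < ε) :
    ∃ (A : Set X) (θ : X → X),
      IsPartialIso μ E A θ ∧
      (∀ x ∈ A, ∃ i, x ∈ Adom i ∧ f i x = θ x) ∧
      1 - ε < μ A := by
  classical
  rcases isEmpty_or_nonempty X with hX | hX
  · exfalso
    have h1 : (Set.univ : Set X) = ∅ := Set.univ_eq_empty_iff.mpr hX
    have h2 := measure_univ (μ := μ)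
    rw [h1, measure_empty] at h2
    exact zero_ne_one h2
  by_contra hcon
  push_neg at hcon
  have hbound : ∀ P : DSE.Pc μ E Adom f, μ P.A ≤ 1 - ε := fun P =>
    hcon P.A P.θ P.iso P.sub
  have hn0 : n ≠ 0 := by omega
  set η := min ε 1 with hηdef
  have hη0 : η ≠ 0 := (lt_min hε one_pos).ne'
  have hη1 : η ≤ 1 := min_le_right _ _
  have hμC : ∀ P : DSE.Pc μ E Adom f, η ≤ μ P.C := by
    intro P
    have h1 : μ P.A + μ P.C = 1 := DSE.measAC P
    have h2 : μ P.A + η ≤ 1 := by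
      calc μ P.A + η ≤ (1 - ε) + η := add_le_add_left (hbound P) η
        _ ≤ (1 - η) + η := add_le_add_left (tsub_le_tsub_left (min_le_left ε 1) 1) η
        _ = 1 := by
            rw [add_comm, add_tsub_cancel_iff_le.mpr hη1]
    have h3 : μ P.A + η ≤ μ P.A + μ P.C := h2.trans_eq h1.symm
    exact (ENNReal.add_le_add_iff_left (measure_ne_top μ P.A)).mp h3
  obtain ⟨c0, hc00, hc0top, hgain⟩ := DSE.gain hiso hn0 hrow hcol η hη0 hη1
  -- the empty piece
  have hP0iso : IsPartialIso μ E (∅ : Set X) id := by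
    refine ⟨MeasurableSet.empty, measurable_id, ?_, ?_, ?_, ?_⟩
    · intro x hx; exact absurd hx (Set.notMem_empty x)
    · rw [Set.image_id]; exact MeasurableSet.empty
    · intro x hx; exact absurd hx (Set.notMem_empty x)
    · intro s hs _
      rw [Set.image_id]
  let P0 : DSE.Pc μ E Adom f :=
    ⟨∅, id, hP0iso, fun x hx => absurd hx (Set.notMem_empty x)⟩
  set s := sSup (Set.range fun P : DSE.Pc μ E Adom f => μ P.A) with hsdef
  have hsle1 : s ≤ 1 := sSup_le (by rintro _ ⟨P, rfl⟩; exact prob_le_one)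
  have hstop : s ≠ ∞ := (hsle1.trans_lt (by norm_num)).ne
  have hs_ge : c0 ≤ s := by
    obtain ⟨P1, hP1⟩ := hgain P0 (hμC P0)
    have h4 : c0 ≤ μ P1.A := by
      have h5 : μ (P0.A) = 0 := by
        show μ (∅ : Set X) = 0
        exact measure_empty
      rw [h5, zero_add] at hP1
      exact hP1
    exact h4.trans (le_sSup (Set.mem_range_self P1))
  have hs0 : s ≠ 0 := fun h => hc00 (le_antisymm (h ▸ hs_ge) zero_le)
  have hlt : s - c0 < s := ENNReal.sub_lt_self hstop hs0 hc00
  obtain ⟨b, ⟨P, rfl⟩, hPb⟩ := lt_sSup_iff.mp hlt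
  obtain ⟨P', hP'⟩ := hgain P (hμC P)
  have h4 : s < μ P.A + c0 := by
    have h6 := ENNReal.add_lt_add_right hc0top hPb
    rwa [tsub_add_cancel_of_le hs_ge] at h6
  exact absurd ((h4.trans_le hP').trans_le (le_sSup (Set.mem_range_self P'))) (lt_irrefl s)
end

section
/- Let G be a measure-preserving 2n-regular countable Borel graph on a standard probability space (X,μ) (symmetric G = flip(G) ⊆ E with exactly 2n neighbours a.e.), H ⊆ G a division (H ⊔ flip(H) = G), and suppose H admits a better path {φ_i : V_{i−1} → V_i, i=1,…,k} with P = ⋃ graph(φ_i). Then H_1 = (H ∖ P) ∪ flip(P) is also a division of G and E(H_1) = E(H) − 2μ(V_0). -/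
open MeasureTheory
open scoped ENNReal

/-- The out-degree of `x` in a directed graph `H ⊆ X × X`. -/
noncomputable def outDeg {X : Type*} (H : Set (X × X)) (x : X) : ℕ :=
  {y | (x, y) ∈ H}.ncard

/-- The error `E(H) = ∫ |n − d_H(x)| dμ(x)` of a division `H`. -/
noncomputable def divErr {X : Type*} [MeasurableSpace X] (μ : Measure X) (n : ℕ)
    (H : Set (X × X)) : ℝ≥0∞ :=
  ∫⁻ x, ((((n : ℤ) - (outDeg H x : ℤ)).natAbs : ℕ) : ℝ≥0∞) ∂μ

/-- `H` is a division of the symmetric graph `G`: `H ⊔ flip(H) = G`. -/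
def IsDivision {X : Type*} (G H : Set (X × X)) : Prop :=
  H ∪ (Prod.swap ⁻¹' H) = G ∧ H ∩ (Prod.swap ⁻¹' H) = ∅

/-- reversing a better path in a division `H` of a measure-preserving
`2n`-regular graph `G` yields a new division `H₁ = (H ∖ P) ∪ flip(P)` with
`E(H₁) = E(H) − 2μ(V₀)`. -/
theorem better_path_improves_division
    {X : Type*} [MeasurableSpace X] [StandardBorelSpace X]
    (μ : Measure X) [IsProbabilityMeasure μ]
    (n : ℕ) (hn : 1 ≤ n) (G : Set (X × X))
    (hGsym : ∀ p : X × X, p ∈ G ↔ (p.2, p.1) ∈ G)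
    (hGreg : ∀ᵐ x ∂μ, ({y | (x, y) ∈ G}).encard = (2 * n : ℕ))
    (hmp : ∀ (g : X → X) (A : Set X), MeasurableSet A → Measurable g →
      Set.InjOn g A → (∀ x ∈ A, (x, g x) ∈ G) → μ (g '' A) = μ A)
    (H : Set (X × X)) (hH : IsDivision G H)
    (k : ℕ) (hk : 1 ≤ k) (V : Fin (k + 1) → Set X) (φ : Fin k → X → X)
    (hVmeas : ∀ i, MeasurableSet (V i))
    (hVdisj : Pairwise (Function.onFun Disjoint V))
    (hgraph : ∀ (i : Fin k), ∀ x ∈ V i.castSucc, (x, φ i x) ∈ H)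
    (hmeas : ∀ i, Measurable (φ i))
    (hinj : ∀ i, Set.InjOn (φ i) (V i.castSucc))
    (himg : ∀ i, φ i '' V i.castSucc = V i.succ)
    (hφmp : ∀ (i : Fin k), ∀ s ⊆ V i.castSucc, MeasurableSet s → μ (φ i '' s) = μ s)
    (hV0 : V 0 ⊆ {x | n < outDeg H x})
    (hVk : V (Fin.last k) ⊆ {x | outDeg H x < n}) :
    IsDivision G ((H \ {p : X × X | ∃ i : Fin k, p.1 ∈ V i.castSucc ∧ φ i p.1 = p.2}) ∪
        (Prod.swap ⁻¹' {p : X × X | ∃ i : Fin k, p.1 ∈ V i.castSucc ∧ φ i p.1 = p.2})) ∧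
      divErr μ n ((H \ {p : X × X | ∃ i : Fin k, p.1 ∈ V i.castSucc ∧ φ i p.1 = p.2}) ∪
          (Prod.swap ⁻¹' {p : X × X | ∃ i : Fin k, p.1 ∈ V i.castSucc ∧ φ i p.1 = p.2})) =
        divErr μ n H - 2 * μ (V 0) := by
  classical
  haveI : NeZero k := ⟨by omega⟩
  set P : Set (X × X) := {p : X × X | ∃ i : Fin k, p.1 ∈ V i.castSucc ∧ φ i p.1 = p.2}
    with hPdef
  set H₁ : Set (X × X) := (H \ P) ∪ (Prod.swap ⁻¹' P) with hH₁def
  have hlastne : Fin.last k ≠ 0 := by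
    intro h
    have := congrArg Fin.val h
    simp [Fin.val_zero] at this
    omega
  have hPH : P ⊆ H := by
    rintro ⟨x, y⟩ ⟨i, hx, hy⟩
    have := hgraph i x hx
    simp only at hy
    rwa [hy] at this
  have hnot : ∀ {x y : X}, (x, y) ∈ H → (y, x) ∈ H → False := by
    intro x y h1 h2
    have : (x, y) ∈ H ∩ (Prod.swap ⁻¹' H) := ⟨h1, h2⟩
    rw [hH.2] at this
    exact this
  -- index uniqueness
  have hVidx : ∀ {x : X} (a b : Fin (k + 1)), x ∈ V a → x ∈ V b → a = b := by
    intro x a b ha hb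
    by_contra hne
    exact Set.disjoint_left.1 (hVdisj hne) ha hb
  -- the division part
  have hdiv : IsDivision G H₁ := by
    constructor
    · rw [← hH.1]
      ext ⟨x, y⟩
      have h1 : (x, y) ∈ P → (x, y) ∈ H := fun h => hPH h
      have h2 : (y, x) ∈ P → (y, x) ∈ H := fun h => hPH h
      simp only [hH₁def, Set.mem_union, Set.mem_diff, Set.mem_preimage, Prod.swap_prod_mk]
      tauto
    · ext ⟨x, y⟩
      simp only [hH₁def, Set.mem_inter_iff, Set.mem_union, Set.mem_diff, Set.mem_preimage,
        Prod.swap_prod_mk, Set.mem_empty_iff_false, iff_false]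
      rintro ⟨h1 | h1, h2 | h2⟩
      · exact hnot h1.1 h2.1
      · exact h1.2 h2
      · exact h2.2 h1
      · exact hnot (hPH h1) (hPH h2)
  refine ⟨hdiv, ?_⟩
  -- pointwise degree computation
  have key : ∀ x : X, ({y | (x, y) ∈ G}).Finite →
      ((((n : ℤ) - (outDeg H x : ℤ)).natAbs : ℕ) : ℝ≥0∞) =
      ((((n : ℤ) - (outDeg H₁ x : ℤ)).natAbs : ℕ) : ℝ≥0∞) +
        (V 0 ∪ V (Fin.last k)).indicator (1 : X → ℝ≥0∞) x := by
    intro x hGfin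
    set A : Set X := {y | (x, y) ∈ H} with hAdef
    have finA : A.Finite := hGfin.subset (fun y hy => by
      have h2 : (x, y) ∈ H ∪ (Prod.swap ⁻¹' H) := Or.inl hy
      rw [hH.1] at h2
      exact h2)
    set Pout : Set X := {y | (x, y) ∈ P} with hPoutdef
    set Pin : Set X := {y | (y, x) ∈ P} with hPindef
    have finPin : Pin.Finite := hGfin.subset (by
      intro y hy
      have h1 : (y, x) ∈ H ∪ (Prod.swap ⁻¹' H) := Or.inl (hPH hy)
      rw [hH.1] at h1
      exact (hGsym (x, y)).2 h1)
    have hout : {y | (x, y) ∈ H₁} = (A \ Pout) ∪ Pin := by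
      ext y
      simp only [hH₁def, Set.mem_union, Set.mem_diff, Set.mem_preimage, Prod.swap_prod_mk,
        Set.mem_setOf_eq, hAdef, hPoutdef, hPindef]
    have hdisj : Disjoint (A \ Pout) Pin := by
      rw [Set.disjoint_left]
      rintro y ⟨hyA, -⟩ hyP
      exact hnot hyA (hPH hyP)
    have hd' : outDeg H₁ x = (A \ Pout).ncard + Pin.ncard := by
      rw [outDeg, hout, Set.ncard_union_eq hdisj finA.diff finPin]
    have hPoutA : Pout ⊆ A := fun y hy => hPH hy
    -- case analysis
    by_cases hc : ∃ i : Fin k, x ∈ V i.castSucc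
    · obtain ⟨i, hi⟩ := hc
      have hPout : Pout = {φ i x} := by
        ext y
        simp only [hPoutdef, Set.mem_setOf_eq, Set.mem_singleton_iff, hPdef]
        constructor
        · rintro ⟨i', hi', rfl⟩
          have : i' = i := Fin.castSucc_injective k (hVidx _ _ hi' hi)
          rw [this]
        · rintro rfl; exact ⟨i, hi, rfl⟩
      have hmem : φ i x ∈ A := hgraph i x hi
      have hdpos : 0 < A.ncard := (Set.ncard_pos finA).2 ⟨_, hmem⟩
      have hdiff : (A \ Pout).ncard = A.ncard - 1 := by
        rw [hPout, Set.ncard_diff_singleton_of_mem hmem]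
      by_cases hs : ∃ j : Fin k, x ∈ V j.succ
      · -- interior point: degree unchanged
        obtain ⟨j, hj⟩ := hs
        have hxV0 : x ∉ V 0 := fun h => Fin.succ_ne_zero j (hVidx _ _ hj h)
        have hxVl : x ∉ V (Fin.last k) := fun h => (Fin.castSucc_lt_last i).ne (hVidx _ _ hi h)
        obtain ⟨y₀, hy₀, hy₀x⟩ : x ∈ φ j '' V j.castSucc := (himg j).symm ▸ hj
        have hPin : Pin = {y₀} := by
          ext y
          simp only [hPindef, Set.mem_setOf_eq, Set.mem_singleton_iff, hPdef]
          constructor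
          · rintro ⟨i', hyi', hix⟩
            have hx' : x ∈ V i'.succ := (himg i') ▸ ⟨y, hyi', hix⟩
            have : i' = j := Fin.succ_injective k (hVidx _ _ hx' hj)
            subst this
            exact hinj i' hyi' hy₀ (hix.trans hy₀x.symm)
          · rintro rfl; exact ⟨j, hy₀, hy₀x⟩
        have : outDeg H₁ x = outDeg H x := by
          rw [hd', hdiff, hPin, Set.ncard_singleton, outDeg, ← hAdef]
          omega
        rw [this, Set.indicator_of_notMem (by simp [hxV0, hxVl]), add_zero]
      · -- x ∈ V 0
        have hx0 : x ∈ V 0 := by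
          have hiz : i.castSucc = 0 := by
            by_contra hne
            obtain ⟨j, hj⟩ := Fin.exists_succ_eq.2 hne
            exact hs ⟨j, hj ▸ hi⟩
          rwa [hiz] at hi
        have hxVl : x ∉ V (Fin.last k) := by
          intro h
          exact hlastne (hVidx _ _ hx0 h).symm
        have hPin : Pin = ∅ := by
          ext y
          simp only [hPindef, Set.mem_setOf_eq, hPdef, Set.mem_empty_iff_false, iff_false]
          rintro ⟨i', hyi', hix⟩
          exact hs ⟨i', (himg i') ▸ ⟨y, hyi', hix⟩⟩
        have hdeg : outDeg H₁ x = outDeg H x - 1 := by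
          rw [hd', hdiff, hPin, Set.ncard_empty, outDeg, ← hAdef, add_zero]
        have hgt : n < outDeg H x := hV0 hx0
        rw [Set.indicator_of_mem (Set.mem_union_left _ hx0), Pi.one_apply, hdeg]
        rw [show ((((n : ℤ) - ((outDeg H x - 1 : ℕ) : ℤ)).natAbs : ℕ) : ℝ≥0∞) + 1 =
            (((((n : ℤ) - ((outDeg H x - 1 : ℕ) : ℤ)).natAbs + 1 : ℕ)) : ℝ≥0∞) by push_cast; ring]
        congr 1
        omega
    · by_cases hs : ∃ j : Fin k, x ∈ V j.succ
      · -- x ∈ V last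
        obtain ⟨j, hj⟩ := hs
        have hxl : x ∈ V (Fin.last k) := by
          have hjl : j.succ = Fin.last k := by
            by_contra hne
            obtain ⟨i, hi⟩ := Fin.exists_castSucc_eq.2 hne
            exact hc ⟨i, hi ▸ hj⟩
          rwa [hjl] at hj
        have hxV0 : x ∉ V 0 := fun h => Fin.succ_ne_zero j (hVidx _ _ hj h)
        have hPout : Pout = ∅ := by
          ext y
          simp only [hPoutdef, Set.mem_setOf_eq, hPdef, Set.mem_empty_iff_false, iff_false]
          rintro ⟨i', hi', -⟩
          exact hc ⟨i', hi'⟩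
        obtain ⟨y₀, hy₀, hy₀x⟩ : x ∈ φ j '' V j.castSucc := (himg j).symm ▸ hj
        have hPin : Pin = {y₀} := by
          ext y
          simp only [hPindef, Set.mem_setOf_eq, Set.mem_singleton_iff, hPdef]
          constructor
          · rintro ⟨i', hyi', hix⟩
            have hx' : x ∈ V i'.succ := (himg i') ▸ ⟨y, hyi', hix⟩
            have : i' = j := Fin.succ_injective k (hVidx _ _ hx' hj)
            subst this
            exact hinj i' hyi' hy₀ (hix.trans hy₀x.symm)
          · rintro rfl; exact ⟨j, hy₀, hy₀x⟩
        have hdeg : outDeg H₁ x = outDeg H x + 1 := by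
          rw [hd', hPout, hPin, Set.diff_empty, Set.ncard_singleton, outDeg, ← hAdef]
        have hlt : outDeg H x < n := hVk hxl
        rw [Set.indicator_of_mem (Set.mem_union_right _ hxl), Pi.one_apply, hdeg]
        rw [show ((((n : ℤ) - ((outDeg H x + 1 : ℕ) : ℤ)).natAbs : ℕ) : ℝ≥0∞) + 1 =
            (((((n : ℤ) - ((outDeg H x + 1 : ℕ) : ℤ)).natAbs + 1 : ℕ)) : ℝ≥0∞) by push_cast; ring]
        congr 1
        omega
      · -- untouched point
        have hxV0 : x ∉ V 0 := by
          intro h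
          refine hc ⟨0, ?_⟩
          have h0 : ((0 : Fin k).castSucc : Fin (k + 1)) = 0 := Fin.ext (by simp)
          rwa [h0]
        have hxVl : x ∉ V (Fin.last k) := by
          intro h
          obtain ⟨j, hj⟩ := Fin.exists_succ_eq.2 hlastne
          exact hs ⟨j, hj ▸ h⟩
        have hPout : Pout = ∅ := by
          ext y
          simp only [hPoutdef, Set.mem_setOf_eq, hPdef, Set.mem_empty_iff_false, iff_false]
          rintro ⟨i', hi', -⟩
          exact hc ⟨i', hi'⟩
        have hPin : Pin = ∅ := by
          ext y
          simp only [hPindef, Set.mem_setOf_eq, hPdef, Set.mem_empty_iff_false, iff_false]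
          rintro ⟨i', hyi', hix⟩
          exact hs ⟨i', (himg i') ▸ ⟨y, hyi', hix⟩⟩
        have : outDeg H₁ x = outDeg H x := by
          rw [hd', hPout, hPin, Set.diff_empty, Set.ncard_empty, add_zero, outDeg, ← hAdef]
        rw [this, Set.indicator_of_notMem (by simp [hxV0, hxVl]), add_zero]
  -- measure chain: μ (V (last k)) = μ (V 0)
  have hμchain : ∀ i : Fin k, μ (V i.succ) = μ (V i.castSucc) := by
    intro i
    rw [← himg i]
    exact hφmp i _ (subset_refl _) (hVmeas _)
  have hμconst : ∀ m : ℕ, ∀ h : m < k + 1, μ (V ⟨m, h⟩) = μ (V 0) := by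
    intro m
    induction m with
    | zero => intro h; rfl
    | succ m ih =>
      intro h
      have hm : m < k := by omega
      have h1 : (⟨m + 1, h⟩ : Fin (k + 1)) = (⟨m, hm⟩ : Fin k).succ := rfl
      have h2 : (⟨m, by omega⟩ : Fin (k + 1)) = (⟨m, hm⟩ : Fin k).castSucc := rfl
      rw [h1, hμchain, ← h2, ih]
  have hμlast : μ (V (Fin.last k)) = μ (V 0) := hμconst k (by omega)
  -- assemble the integral identity
  have hfin_ae : ∀ᵐ x ∂μ, ({y | (x, y) ∈ G}).Finite :=
    hGreg.mono fun x hx => Set.finite_of_encard_eq_coe hx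
  have hindmeas : Measurable ((V 0 ∪ V (Fin.last k)).indicator (1 : X → ℝ≥0∞)) :=
    measurable_one.indicator ((hVmeas 0).union (hVmeas _))
  have hdisjV : Disjoint (V 0) (V (Fin.last k)) :=
    hVdisj (fun h => hlastne h.symm)
  have hEq : divErr μ n H = divErr μ n H₁ + 2 * μ (V 0) := by
    calc divErr μ n H
        = ∫⁻ x, (((((n : ℤ) - (outDeg H₁ x : ℤ)).natAbs : ℕ) : ℝ≥0∞) +
            (V 0 ∪ V (Fin.last k)).indicator (1 : X → ℝ≥0∞) x) ∂μ := by
          refine lintegral_congr_ae (hfin_ae.mono fun x hx => ?_)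
          exact key x hx
      _ = divErr μ n H₁ + ∫⁻ x, (V 0 ∪ V (Fin.last k)).indicator (1 : X → ℝ≥0∞) x ∂μ := by
          rw [divErr, lintegral_add_right _ hindmeas]
      _ = divErr μ n H₁ + 2 * μ (V 0) := by
          rw [lintegral_indicator ((hVmeas 0).union (hVmeas _))]
          simp only [Pi.one_apply]
          rw [setLIntegral_one, measure_union hdisjV (hVmeas _), hμlast, two_mul]
  rw [hEq, ENNReal.add_sub_cancel_right]
  exact ENNReal.mul_ne_top (by norm_num) (measure_ne_top μ _)
end
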